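/- arXiv:1710.09708 — 9 statements merged into one kernel-verified Lean document; each statement's English description precedes it below -/
import Mathlib

section
/- For any b > 0, the function w(x) = (1 - x/2)e^x + ((b-1)/2)x - 1 has a unique root ρ on (0, ∞); moreover w(x) > 0 for 0 < x < ρ and w(x) < 0 for x > ρ. -/
open Real Set Filter Topology

theorem stmt_0 (b : ℝ) (hb : 0 < b) :
    ∃ ρ : ℝ, 0 < ρ ∧
      (1 - ρ / 2) * Real.exp ρ + (b - 1) / 2 * ρ - 1 = 0 ∧
      (∀ x : ℝ, 0 < x → (1 - x / 2) * Real.exp x + (b - 1) / 2 * x - 1 = 0 → x = ρ) ∧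
      (∀ x : ℝ, 0 < x → x < ρ → 0 < (1 - x / 2) * Real.exp x + (b - 1) / 2 * x - 1) ∧
      (∀ x : ℝ, ρ < x → (1 - x / 2) * Real.exp x + (b - 1) / 2 * x - 1 < 0) := by
  set f : ℝ → ℝ := fun x => (1 - x / 2) * Real.exp x + (b - 1) / 2 * x - 1 with hf
  have hf0 : f 0 = 0 := by simp [hf]
  -- first derivative
  have hderiv : ∀ x : ℝ, HasDerivAt f ((1 - x) / 2 * Real.exp x + (b - 1) / 2) x := by
    intro x
    have h1 : HasDerivAt (fun x : ℝ => (1 - x / 2) * Real.exp x)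
        ((-(1/2)) * Real.exp x + (1 - x / 2) * Real.exp x) x := by
      exact (((hasDerivAt_id x).div_const 2).const_sub 1).mul (Real.hasDerivAt_exp x)
    have h2 : HasDerivAt (fun x : ℝ => (b - 1) / 2 * x) ((b - 1) / 2) x := by
      simpa using (hasDerivAt_id x).const_mul ((b - 1) / 2)
    have h3 := (h1.add h2).sub_const 1
    convert h3 using 1
    · rfl
    · rfl
    · rfl
    · ring
  have hcont : Continuous f := by
    fun_prop
  -- strict concavity on Ici 0
  have hconc : StrictConcaveOn ℝ (Ici (0:ℝ)) f := by
    apply strictConcaveOn_of_deriv2_neg (convex_Ici 0) hcont.continuousOn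
    intro x hx
    rw [interior_Ici] at hx
    have hd1 : deriv f = fun x => (1 - x) / 2 * Real.exp x + (b - 1) / 2 :=
      funext fun x => (hderiv x).deriv
    have hd2 : HasDerivAt (fun x : ℝ => (1 - x) / 2 * Real.exp x + (b - 1) / 2)
        (-x / 2 * Real.exp x) x := by
      have h1 : HasDerivAt (fun x : ℝ => (1 - x) / 2 * Real.exp x)
          ((-(1:ℝ))/2 * Real.exp x + (1 - x) / 2 * Real.exp x) x := by
        exact (((hasDerivAt_id x).const_sub 1).div_const 2).mul (Real.hasDerivAt_exp x)
      have := h1.add_const ((b - 1) / 2)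
      convert this using 1
      · rfl
      · rfl
      · ring
    have : deriv (deriv f) x = -x / 2 * Real.exp x := by
      rw [hd1]; exact hd2.deriv
    simp only [Function.iterate_succ, Function.iterate_zero, Function.comp_apply, id_eq]
    rw [this]
    have := Real.exp_pos x
    nlinarith [hx.out]
  -- a point where f is positive
  set X : ℝ := max 4 b with hX
  have hX4 : (4:ℝ) ≤ X := le_max_left _ _
  have hXb : b ≤ X := le_max_right _ _
  have hX0 : (0:ℝ) < X := by linarith
  have hfX : f X < 0 := by
    have h1 : X / 3 + 1 ≤ Real.exp (X / 3) := by
      have := Real.add_one_le_exp (X / 3); linarith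
    have h2 : Real.exp X = (Real.exp (X / 3)) ^ 3 := by
      rw [← Real.exp_nat_mul]; congr 1; push_cast; ring
    have h3 : (X/3+1)^3 ≤ Real.exp X := by
      rw [h2]
      gcongr
    have h4 : (0:ℝ) < Real.exp X := Real.exp_pos X
    simp only [hf]
    nlinarith [sq_nonneg X, sq_nonneg (X - 4)]
  -- find x0 ∈ (0, X) with f x0 > 0
  obtain ⟨x0, hx0X, hx0pos, hfx0⟩ : ∃ x0, x0 ∈ Ioo (0:ℝ) X ∧ 0 < x0 ∧ 0 < f x0 := by
    have hd0 : HasDerivAt f (b / 2) 0 := by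
      have h := hderiv 0
      simp only [Real.exp_zero] at h
      convert h using 1
      ring
    have hslope : Tendsto (slope f 0) (𝓝[≠] 0) (𝓝 (b / 2)) :=
      hasDerivAt_iff_tendsto_slope.mp hd0
    have hslope' : Tendsto (slope f 0) (𝓝[>] 0) (𝓝 (b / 2)) :=
      hslope.mono_left (nhdsWithin_mono _ (fun x hx => ne_of_gt hx))
    have hev : ∀ᶠ y in 𝓝[>] (0:ℝ), 0 < slope f 0 y :=
      hslope' (Ioi_mem_nhds (by linarith : (0:ℝ) < b / 2))
    have hmem : Ioo (0:ℝ) X ∈ 𝓝[>] (0:ℝ) :=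
      Ioo_mem_nhdsGT_of_mem (left_mem_Ico.mpr hX0)
    obtain ⟨y, hy1, hy2⟩ := (hev.and (eventually_of_mem hmem (fun y hy => hy))).exists
    refine ⟨y, hy2, hy2.1, ?_⟩
    have : slope f 0 y = f y / y := by simp [slope_def_field, hf0]
    rw [this] at hy1
    have hy0 : y ≠ 0 := ne_of_gt hy2.1
    have := mul_pos hy1 hy2.1
    rwa [div_mul_cancel₀ _ hy0] at this
  -- IVT to find root ρ ∈ (x0, X)
  obtain ⟨ρ, hρmem, hfρ⟩ : ∃ ρ ∈ Ioo x0 X, f ρ = 0 := by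
    have hle : x0 ≤ X := le_of_lt hx0X.2
    have := intermediate_value_Ioo' hle hcont.continuousOn
    have h0mem : (0:ℝ) ∈ Ioo (f X) (f x0) := ⟨hfX, hfx0⟩
    obtain ⟨ρ, hρ, hρ0⟩ := this h0mem
    exact ⟨ρ, hρ, hρ0⟩
  have hρpos : 0 < ρ := lt_trans hx0pos hρmem.1
  -- sign on (0, ρ)
  have hpos : ∀ x : ℝ, 0 < x → x < ρ → 0 < f x := by
    intro x hx hxρ
    have h := hconc.2 (le_refl (0:ℝ) : (0:ℝ) ∈ Ici (0:ℝ)) (le_of_lt hρpos : ρ ∈ Ici (0:ℝ))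
      (ne_of_lt hρpos)
      (show (0:ℝ) < 1 - x / ρ by rw [sub_pos]; exact (div_lt_one hρpos).mpr hxρ)
      (div_pos hx hρpos) (by ring : (1 - x / ρ) + x / ρ = 1)
    simp only [smul_eq_mul, mul_zero, zero_add, hf0] at h
    rw [div_mul_cancel₀ x (ne_of_gt hρpos), hfρ, mul_zero] at h
    exact h
  -- sign on (ρ, ∞)
  have hneg : ∀ x : ℝ, ρ < x → f x < 0 := by
    intro x hρx
    have hx0' : 0 < x := lt_trans hρpos hρx
    have h := hconc.2 (le_refl (0:ℝ) : (0:ℝ) ∈ Ici (0:ℝ)) (le_of_lt hx0' : x ∈ Ici (0:ℝ))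
      (ne_of_lt hx0')
      (show (0:ℝ) < 1 - ρ / x by rw [sub_pos]; exact (div_lt_one hx0').mpr hρx)
      (div_pos hρpos hx0') (by ring : (1 - ρ / x) + ρ / x = 1)
    simp only [smul_eq_mul, mul_zero, zero_add, hf0] at h
    rw [div_mul_cancel₀ ρ (ne_of_gt hx0'), hfρ] at h
    have hq : 0 < ρ / x := div_pos hρpos hx0'
    by_contra hge
    push_neg at hge
    nlinarith [mul_nonneg hq.le hge]
  refine ⟨ρ, hρpos, hfρ, ?_, hpos, hneg⟩
  intro x hx hfx
  rcases lt_trichotomy x ρ with h | h | h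
  · exact absurd hfx (ne_of_gt (hpos x hx h))
  · exact h
  · exact absurd hfx (ne_of_lt (hneg x h))
end

section
/- For every b > 0, the integral ∫₀^∞ s·e^{-2s}·(1 - e^{-s})^{b-3}·(e^s - 1 - (s/2)e^s + ((b-1)/2)s) ds equals 0. -/
open Real MeasureTheory Filter

private lemma aux_deriv (b : ℝ) {x : ℝ} (hx : 0 < x) :
    HasDerivAt (fun s => s ^ 2 * Real.exp (-s) * (1 - Real.exp (-s)) ^ (b - 2) / 2)
      (x * Real.exp (-2 * x) * (1 - Real.exp (-x)) ^ (b - 3) *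
        (Real.exp x - 1 - x / 2 * Real.exp x + (b - 1) / 2 * x)) x := by
  have hA : Real.exp (-x) < 1 := Real.exp_lt_one_iff.mpr (by linarith)
  have h1A : (0 : ℝ) < 1 - Real.exp (-x) := by linarith
  have hexp : HasDerivAt (fun s : ℝ => Real.exp (-s)) (-Real.exp (-x)) x := by
    simpa using (hasDerivAt_neg x).exp
  have hsub : HasDerivAt (fun s : ℝ => 1 - Real.exp (-s)) (Real.exp (-x)) x := by
    exact ((hasDerivAt_const x (1 : ℝ)).sub hexp).congr_deriv (by ring)
  have hpow : HasDerivAt (fun s : ℝ => (1 - Real.exp (-s)) ^ (b - 2))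
      (Real.exp (-x) * (b - 2) * (1 - Real.exp (-x)) ^ (b - 3)) x := by
    have h := hsub.rpow_const (p := b - 2) (Or.inl h1A.ne')
    rw [show b - 2 - 1 = b - 3 by ring] at h
    exact h
  have hsq : HasDerivAt (fun s : ℝ => s ^ 2) (2 * x) x := by
    simpa using hasDerivAt_pow 2 x
  have hmul := ((hsq.mul hexp).mul hpow).div_const 2
  simp only [Pi.mul_apply] at hmul
  refine hmul.congr_deriv ?_
  symm
  have hP : (1 - Real.exp (-x)) ^ (b - 2) = (1 - Real.exp (-x)) ^ (b - 3) * (1 - Real.exp (-x)) := by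
    rw [show b - 2 = (b - 3) + 1 by ring, Real.rpow_add_one h1A.ne']
  have h2x : Real.exp (-2 * x) = Real.exp (-x) * Real.exp (-x) := by
    rw [← Real.exp_add]; ring_nf
  have hEx : Real.exp (-x) = (Real.exp x)⁻¹ := Real.exp_neg x
  rw [hP, h2x, hEx]
  have hE : Real.exp x ≠ 0 := (Real.exp_pos x).ne'
  field_simp
  ring

private lemma aux_cont (b : ℝ) (hb : 0 < b) :
    ContinuousWithinAt (fun s => s ^ 2 * Real.exp (-s) * (1 - Real.exp (-s)) ^ (b - 2) / 2)
      (Set.Ici 0) 0 := by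
  have hF0 : (0 : ℝ) ^ 2 * Real.exp (-0) * (1 - Real.exp (-0)) ^ (b - 2) / 2 = 0 := by
    norm_num
  rw [ContinuousWithinAt, hF0]
  have hnonneg : ∀ᶠ s in nhdsWithin 0 (Set.Ici 0),
      0 ≤ s ^ 2 * Real.exp (-s) * (1 - Real.exp (-s)) ^ (b - 2) / 2 := by
    filter_upwards [self_mem_nhdsWithin] with s hs
    have : Real.exp (-s) ≤ 1 := Real.exp_le_one_iff.mpr (by simpa using hs)
    have h1 : (0:ℝ) ≤ 1 - Real.exp (-s) := by linarith
    positivity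
  rcases le_or_gt 2 b with hb2 | hb2
  · -- b ≥ 2 : bound by s^2/2
    have hub : ∀ᶠ s in nhdsWithin 0 (Set.Ici 0),
        s ^ 2 * Real.exp (-s) * (1 - Real.exp (-s)) ^ (b - 2) / 2 ≤ s ^ 2 / 2 := by
      filter_upwards [self_mem_nhdsWithin] with s hs
      have hs0 : (0:ℝ) ≤ s := hs
      have he1 : Real.exp (-s) ≤ 1 := Real.exp_le_one_iff.mpr (by linarith)
      have h1 : (0:ℝ) ≤ 1 - Real.exp (-s) := by linarith
      have h2 : (1 - Real.exp (-s)) ^ (b - 2) ≤ 1 :=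
        Real.rpow_le_one h1 (by nlinarith [Real.exp_pos (-s)]) (by linarith)
      calc s ^ 2 * Real.exp (-s) * (1 - Real.exp (-s)) ^ (b - 2) / 2
          ≤ s ^ 2 * 1 * 1 / 2 := by gcongr
        _ = s ^ 2 / 2 := by ring
    apply squeeze_zero' hnonneg hub
    have : Filter.Tendsto (fun s : ℝ => s ^ 2 / 2) (nhds 0) (nhds 0) := by
      have := ((continuous_pow 2).div_const 2).tendsto (0:ℝ)
      simpa using this
    exact this.mono_left nhdsWithin_le_nhds
  · -- b < 2 : bound by (exp (2-b)/2) * s ^ b on Icc 0 1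
    have hub : ∀ᶠ s in nhdsWithin 0 (Set.Ici 0),
        s ^ 2 * Real.exp (-s) * (1 - Real.exp (-s)) ^ (b - 2) / 2
          ≤ Real.exp (2 - b) / 2 * s ^ b := by
      filter_upwards [Icc_mem_nhdsGE_of_mem (by constructor <;> norm_num : (0:ℝ) ∈ Set.Ico 0 1)]
        with s hs
      rcases eq_or_lt_of_le hs.1 with h0 | h0
      · rw [← h0]
        simp [Real.zero_rpow hb.ne']
      · have hs1 : s ≤ 1 := hs.2
        have hepos := Real.exp_pos (-s)
        have he1 : Real.exp (-s) ≤ 1 := Real.exp_le_one_iff.mpr (by linarith)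
        have hbase : s * Real.exp (-s) ≤ 1 - Real.exp (-s) := by
          have h := Real.add_one_le_exp s
          have key : Real.exp (-s) * Real.exp s = 1 := by
            rw [← Real.exp_add]; norm_num
          nlinarith [mul_le_mul_of_nonneg_left h hepos.le, key]
        have hbpos : 0 < s * Real.exp (-s) := by positivity
        have h2 : (1 - Real.exp (-s)) ^ (b - 2) ≤ (s * Real.exp (-s)) ^ (b - 2) :=
          Real.rpow_le_rpow_of_nonpos hbpos hbase (by linarith)
        have h3 : (s * Real.exp (-s)) ^ (b - 2) = s ^ (b - 2) * Real.exp (-s * (b - 2)) := by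
          rw [Real.mul_rpow h0.le hepos.le, ← Real.exp_mul]
        have h4 : Real.exp (-s * (b - 2)) ≤ Real.exp (2 - b) := by
          apply Real.exp_le_exp.mpr
          nlinarith
        have h5 : (1 - Real.exp (-s)) ^ (b - 2) ≤ s ^ (b - 2) * Real.exp (2 - b) := by
          calc (1 - Real.exp (-s)) ^ (b - 2) ≤ s ^ (b - 2) * Real.exp (-s * (b - 2)) := by
                rw [← h3]; exact h2
            _ ≤ s ^ (b - 2) * Real.exp (2 - b) := by gcongr
        have hsb : s ^ (2:ℕ) * s ^ (b - 2) = s ^ b := by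
          rw [← Real.rpow_natCast s 2, ← Real.rpow_add h0]
          norm_num
        calc s ^ 2 * Real.exp (-s) * (1 - Real.exp (-s)) ^ (b - 2) / 2
            ≤ s ^ 2 * 1 * (s ^ (b - 2) * Real.exp (2 - b)) / 2 := by
              gcongr
          _ = Real.exp (2 - b) / 2 * (s ^ (2:ℕ) * s ^ (b - 2)) := by ring
          _ = Real.exp (2 - b) / 2 * s ^ b := by rw [hsb]
    apply squeeze_zero' hnonneg hub
    have h0 : Filter.Tendsto (fun s : ℝ => s ^ b) (nhds 0) (nhds 0) := by
      have := (Real.continuousAt_rpow_const 0 b (Or.inr hb.le)).tendsto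
      simpa [Real.zero_rpow hb.ne'] using this
    have := (h0.const_mul (Real.exp (2 - b) / 2)).mono_left
      (nhdsWithin_le_nhds (s := Set.Ici 0))
    simpa using this

private lemma aux_top (b : ℝ) :
    Filter.Tendsto (fun s => s ^ 2 * Real.exp (-s) * (1 - Real.exp (-s)) ^ (b - 2) / 2)
      Filter.atTop (nhds 0) := by
  have h1 : Filter.Tendsto (fun s : ℝ => s ^ 2 * Real.exp (-s)) Filter.atTop (nhds 0) :=
    Real.tendsto_pow_mul_exp_neg_atTop_nhds_zero 2
  have hbase : Filter.Tendsto (fun s : ℝ => 1 - Real.exp (-s)) Filter.atTop (nhds 1) := by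
    simpa using tendsto_const_nhds.sub Real.tendsto_exp_neg_atTop_nhds_zero
  have hc : ContinuousAt (fun x : ℝ => x ^ (b - 2)) 1 :=
    Real.continuousAt_rpow_const 1 _ (Or.inl one_ne_zero)
  have h2 : Filter.Tendsto (fun s : ℝ => (1 - Real.exp (-s)) ^ (b - 2)) Filter.atTop (nhds 1) := by
    have := hc.tendsto.comp hbase
    simpa [Real.one_rpow, Function.comp_def] using this
  have := (h1.mul h2).div_const 2
  simpa using this

theorem stmt_1 (b : ℝ) (hb : 0 < b) :
    ∫ s in Set.Ioi (0 : ℝ),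
      s * Real.exp (-2 * s) * (1 - Real.exp (-s)) ^ (b - 3) *
        (Real.exp s - 1 - s / 2 * Real.exp s + (b - 1) / 2 * s) = 0 := by
  by_cases hint : IntegrableOn (fun s =>
      s * Real.exp (-2 * s) * (1 - Real.exp (-s)) ^ (b - 3) *
        (Real.exp s - 1 - s / 2 * Real.exp s + (b - 1) / 2 * s)) (Set.Ioi 0)
  · have h := integral_Ioi_of_hasDerivAt_of_tendsto
      (f := fun s => s ^ 2 * Real.exp (-s) * (1 - Real.exp (-s)) ^ (b - 2) / 2)
      (f' := fun s =>
        s * Real.exp (-2 * s) * (1 - Real.exp (-s)) ^ (b - 3) *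
          (Real.exp s - 1 - s / 2 * Real.exp s + (b - 1) / 2 * s))
      (aux_cont b hb) (fun x hx => aux_deriv b hx) hint (aux_top b)
    rw [h]
    norm_num
  · exact integral_undef hint
end

section
/- Fix b > 0 and let ρ be the unique positive root of w(x) = (1 - x/2)e^x + ((b-1)/2)x - 1. Then the function h₀(x) = x·w(x)/(e^x - 1)² is strictly decreasing on (0, ρ). -/
open Real

private lemma aux_neg_of_deriv (f f' : ℝ → ℝ) (hd : ∀ x, HasDerivAt f (f' x) x)
    (h0 : f 0 = 0) (hneg : ∀ x, 0 < x → f' x < 0) :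
    ∀ x, 0 < x → f x < 0 := by
  intro x hx
  have h : StrictAntiOn f (Set.Ici 0) := by
    apply strictAntiOn_of_deriv_neg (convex_Ici 0)
      (fun y _ => (hd y).continuousAt.continuousWithinAt)
    intro y hy
    rw [interior_Ici] at hy
    rw [(hd y).deriv]
    exact hneg y hy
  have := h (Set.self_mem_Ici) (Set.mem_Ici.mpr hx.le) hx
  simpa [h0] using this

private lemma g2_neg : ∀ x : ℝ, 0 < x →
    1 - (x + x^2/2) * Real.exp x - Real.exp (-x) < 0 := by
  apply aux_neg_of_deriv _ (fun x => Real.exp (-x) - (1 + 2*x + x^2/2) * Real.exp x)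
  · intro x
    have ha : HasDerivAt (fun y : ℝ => y + y^2/2) (1 + 2*x/2) x := by
      simpa [Pi.add_def] using (hasDerivAt_id x).add (((hasDerivAt_id x).pow 2).div_const 2)
    have hb := ha.mul (Real.hasDerivAt_exp x)
    have hc : HasDerivAt (fun y : ℝ => Real.exp (-y)) (Real.exp (-x) * (-1)) x :=
      (hasDerivAt_id x).neg.exp
    have := ((hb.const_sub 1).sub hc)
    refine this.congr_deriv ?_
    ring
  · norm_num
  · intro x hx
    have h1 : Real.exp (-x) < Real.exp 0 := Real.exp_lt_exp.mpr (by linarith)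
    have h2 : Real.exp 0 < Real.exp x := Real.exp_lt_exp.mpr hx
    rw [Real.exp_zero] at h1 h2
    nlinarith [Real.exp_pos x]

private lemma g1_neg : ∀ x : ℝ, 0 < x →
    x - 1 - (x^2/2) * Real.exp x + Real.exp (-x) < 0 := by
  apply aux_neg_of_deriv _ (fun x => 1 - (x + x^2/2) * Real.exp x - Real.exp (-x))
  · intro x
    have ha : HasDerivAt (fun y : ℝ => y^2/2) (2*x/2) x := by
      simpa using ((hasDerivAt_id x).pow 2).div_const 2
    have hb := ha.mul (Real.hasDerivAt_exp x)
    have hc : HasDerivAt (fun y : ℝ => Real.exp (-y)) (Real.exp (-x) * (-1)) x :=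
      (hasDerivAt_id x).neg.exp
    have := (((hasDerivAt_id x).sub_const 1).sub hb).add hc
    refine this.congr_deriv ?_
    ring
  · norm_num
  · exact g2_neg

private lemma g_neg : ∀ x : ℝ, 0 < x →
    (2 - x + x^2/2) - (1 - x + x^2/2) * Real.exp x - Real.exp (-x) < 0 := by
  apply aux_neg_of_deriv _ (fun x => x - 1 - (x^2/2) * Real.exp x + Real.exp (-x))
  · intro x
    have ha : HasDerivAt (fun y : ℝ => 2 - y + y^2/2) (-1 + 2*x/2) x := by
      simpa [Pi.add_def] using (((hasDerivAt_id x).const_sub 2).add (((hasDerivAt_id x).pow 2).div_const 2))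
    have hb : HasDerivAt (fun y : ℝ => 1 - y + y^2/2) (-1 + 2*x/2) x := by
      simpa [Pi.add_def] using (((hasDerivAt_id x).const_sub 1).add (((hasDerivAt_id x).pow 2).div_const 2))
    have hc := hb.mul (Real.hasDerivAt_exp x)
    have hd : HasDerivAt (fun y : ℝ => Real.exp (-y)) (Real.exp (-x) * (-1)) x :=
      (hasDerivAt_id x).neg.exp
    have := (ha.sub hc).sub hd
    refine this.congr_deriv ?_
    ring
  · norm_num
  · exact g1_neg

theorem stmt_3 (b ρ : ℝ) (hb : 0 < b) (hρ : 0 < ρ)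
    (hroot : (1 - ρ / 2) * Real.exp ρ + (b - 1) / 2 * ρ - 1 = 0)
    (hpos : ∀ x : ℝ, 0 < x → x < ρ →
      0 < (1 - x / 2) * Real.exp x + (b - 1) / 2 * x - 1) :
    StrictAntiOn
      (fun x : ℝ => x * ((1 - x / 2) * Real.exp x + (b - 1) / 2 * x - 1) /
        (Real.exp x - 1) ^ 2)
      (Set.Ioo 0 ρ) := by
  apply strictAntiOn_of_deriv_neg (convex_Ioo 0 ρ)
  · apply ContinuousOn.div
    · fun_prop
    · fun_prop
    · intro x hx
      have h2 : Real.exp 0 < Real.exp x := Real.exp_lt_exp.mpr hx.1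
      rw [Real.exp_zero] at h2
      exact pow_ne_zero _ (by linarith)
  · intro x hx
    rw [interior_Ioo] at hx
    obtain ⟨hx0, hxρ⟩ := hx
    have hE : 1 < Real.exp x := by
      have h2 : Real.exp 0 < Real.exp x := Real.exp_lt_exp.mpr hx0
      rwa [Real.exp_zero] at h2
    have hvne : (Real.exp x - 1)^2 ≠ 0 := pow_ne_zero _ (by linarith)
    -- derivative of the inner w
    have h1 : HasDerivAt (fun y : ℝ => (1 - y/2) * Real.exp y + (b-1)/2*y - 1)
        ((-(1/2)) * Real.exp x + (1 - x/2) * Real.exp x + (b-1)/2) x := by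
      have ha : HasDerivAt (fun y : ℝ => 1 - y/2) (-(1/2)) x := by
        simpa using ((hasDerivAt_id x).div_const 2).const_sub 1
      have hb' := ha.mul (Real.hasDerivAt_exp x)
      have hc : HasDerivAt (fun y : ℝ => (b-1)/2*y) ((b-1)/2) x := by
        simpa using (hasDerivAt_id x).const_mul ((b-1)/2)
      have := (hb'.add hc).sub_const 1
      exact this
    have hu := (hasDerivAt_id x).mul h1
    simp only [id_eq] at hu
    have hv : HasDerivAt (fun y : ℝ => (Real.exp y - 1)^2)
        ((2:ℕ) * (Real.exp x - 1)^1 * Real.exp x) x := by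
      simpa [Pi.pow_def] using ((Real.hasDerivAt_exp x).sub_const 1).pow 2
    have hD := hu.div hv hvne
    have hD' : HasDerivAt (fun x : ℝ => x * ((1 - x / 2) * Real.exp x + (b - 1) / 2 * x - 1) /
        (Real.exp x - 1) ^ 2) (((1 * ((1 - x/2) * Real.exp x + (b-1)/2*x - 1)
              + x * ((-(1/2)) * Real.exp x + (1 - x/2) * Real.exp x + (b-1)/2)) * (Real.exp x - 1)^2
            - x * ((1 - x/2) * Real.exp x + (b-1)/2*x - 1) * ((2:ℕ) * (Real.exp x - 1)^1 * Real.exp x))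
            / ((Real.exp x - 1)^2)^2) x := hD
    rw [hD'.deriv]
    apply div_neg_of_neg_of_pos
    · -- numerator < 0
      have hprod : Real.exp x * Real.exp (-x) = 1 := by
        rw [← Real.exp_add]; simp
      -- K < 0
      have hadd := Real.add_one_lt_exp (show -x ≠ 0 by linarith)
      have hK : (1-x) * Real.exp x - 1 < 0 := by
        nlinarith [mul_lt_mul_of_pos_right hadd (Real.exp_pos x), hprod]
      -- G < 0
      have hg := mul_neg_of_pos_of_neg (Real.exp_pos x) (g_neg x hx0)
      have heq : Real.exp x * ((2 - x + x^2/2) - (1 - x + x^2/2) * Real.exp x - Real.exp (-x))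
          = -(1-x+x^2/2) * (Real.exp x)^2 + (2-x+x^2/2) * Real.exp x - 1 := by
        linear_combination -hprod
      rw [heq] at hg
      -- from hpos
      have hgt : 2 - (2-x) * Real.exp x < (b-1)*x := by
        nlinarith [hpos x hx0 hxρ]
      have h2 := mul_lt_mul_of_neg_right hgt hK
      have hGeq : (Real.exp x)^2*(1 - 2*x + x^2/2) + Real.exp x*(x^2/2 + 2*x - 2) + 1
          + (2 - (2-x)*Real.exp x) * ((1-x)*Real.exp x - 1)
          = -(1-x+x^2/2) * (Real.exp x)^2 + (2-x+x^2/2) * Real.exp x - 1 := by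
        ring
      have hS : (Real.exp x)^2*(1 - 2*x + x^2/2) + Real.exp x*(x^2/2 + 2*x - 2) + 1
          + (b-1)*x * ((1-x)*Real.exp x - 1) < 0 := by linarith
      have hfac : (1 * ((1 - x/2) * Real.exp x + (b-1)/2*x - 1)
            + x * ((-(1/2)) * Real.exp x + (1 - x/2) * Real.exp x + (b-1)/2)) * (Real.exp x - 1)^2
          - x * ((1 - x/2) * Real.exp x + (b-1)/2*x - 1) * ((2:ℕ) * (Real.exp x - 1)^1 * Real.exp x)
          = (Real.exp x - 1) * ((Real.exp x)^2*(1 - 2*x + x^2/2) + Real.exp x*(x^2/2 + 2*x - 2) + 1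
          + (b-1)*x * ((1-x)*Real.exp x - 1)) := by
        push_cast
        ring
      rw [hfac]
      exact mul_neg_of_pos_of_neg (by linarith) hS
    · exact pow_pos (pow_pos (by linarith) 2) 2
end

section
/- For every natural number n and real b > 0 with b not an integer ≤ n+1, ∑_{k=0}^∞ C(b-1,k)·(-1)^k/(n + b - k) = 0, where C(b-1,k) is the generalized binomial coefficient. -/
/-- Generalized binomial coefficient `C(b-1, k) = (b-1)(b-2)⋯(b-k)/k!`. -/
noncomputable def genBinomR (b : ℝ) (k : ℕ) : ℝ :=
  (∏ j ∈ Finset.range k, (b - 1 - j)) / (Nat.factorial k)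

lemma genBinomR_zero (b : ℝ) : genBinomR b 0 = 1 := by simp [genBinomR]

lemma genBinomR_succ (b : ℝ) (k : ℕ) :
    genBinomR b (k+1) = genBinomR b k * (b - 1 - k) / (k+1) := by
  unfold genBinomR
  rw [Finset.prod_range_succ, Nat.factorial_succ]
  have h1 : ((k:ℝ)+1) ≠ 0 := by positivity
  have h2 : ((Nat.factorial k : ℕ) : ℝ) ≠ 0 := by
    exact_mod_cast (Nat.factorial_pos k).ne'
  push_cast
  rw [div_mul_eq_mul_div, div_div]
  ring

lemma genBinomR_mul (b : ℝ) (k : ℕ) :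
    genBinomR b k * b = genBinomR (b+1) k * (b - k) := by
  unfold genBinomR
  have h2 : ((Nat.factorial k : ℕ) : ℝ) ≠ 0 := by
    exact_mod_cast (Nat.factorial_pos k).ne'
  have key : (∏ j ∈ Finset.range k, (b - j)) * (b - k) = b * ∏ j ∈ Finset.range k, (b - 1 - j) := by
    have hA := Finset.prod_range_succ (fun j : ℕ => b - (j:ℝ)) k
    have hB := Finset.prod_range_succ' (fun j : ℕ => b - (j:ℝ)) k
    rw [hA] at hB
    rw [hB]
    have : ∀ j : ℕ, b - ((j:ℝ)+1) = b - 1 - j := by intro j; ring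
    simp only [Nat.cast_add, Nat.cast_one, Nat.cast_zero, sub_zero]
    rw [Finset.prod_congr rfl (fun j _ => this j)]
    ring
  have h3 : ∀ j : ℕ, b + 1 - 1 - (j:ℝ) = b - j := by intro j; ring
  rw [Finset.prod_congr rfl (fun j _ => h3 j)]
  field_simp
  linarith [key]

lemma genBinomR_pascal (b : ℝ) (k : ℕ) :
    genBinomR (b+1) (k+1) = genBinomR b (k+1) + genBinomR b k := by
  rw [genBinomR_succ, genBinomR_succ]
  have h1 : ((k:ℝ)+1) ≠ 0 := by positivity
  have key := genBinomR_mul b k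
  field_simp
  linarith [key, mul_comm (genBinomR b k) ((k:ℝ)+1)]

lemma sum_alt (b : ℝ) (m : ℕ) :
    ∑ k ∈ Finset.range (m+1), genBinomR (b+1) k * (-1)^k
      = genBinomR b m * (-1)^m := by
  induction m with
  | zero => simp [genBinomR_zero]
  | succ m ih =>
    rw [Finset.sum_range_succ, ih, genBinomR_pascal b m]
    ring

lemma abs_genBinomR_succ (b : ℝ) (k : ℕ) (hk : b ≤ k + 1) :
    |genBinomR b (k+1)| = |genBinomR b k| * ((k+1-b)/(k+1)) := by
  rw [genBinomR_succ, abs_div, abs_mul]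
  rw [abs_of_pos (show (0:ℝ) < (k:ℝ)+1 by positivity)]
  rw [abs_of_nonpos (show b - 1 - (k:ℝ) ≤ 0 by linarith)]
  rw [mul_div_assoc]
  ring_nf

lemma tendsto_genBinomR (b : ℝ) (hb : 0 < b) :
    Filter.Tendsto (fun m => genBinomR b m) Filter.atTop (nhds 0) := by
  set M := Nat.ceil b with hM
  have hbM : b ≤ M := Nat.le_ceil b
  -- bound: |c (M+j)| ≤ |c M| * exp (-(b * ∑ i in range j, 1/(M+i+1)))
  have key : ∀ j : ℕ, |genBinomR b (M+j)| ≤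
      |genBinomR b M| * Real.exp (-(b * ∑ i ∈ Finset.range j, (1:ℝ)/(M+i+1))) := by
    intro j
    induction j with
    | zero => simp
    | succ j ih =>
      have hk : b ≤ (M+j : ℕ) + 1 := by
        push_cast; have : (0:ℝ) ≤ j := by positivity
        linarith
      have hrec := abs_genBinomR_succ b (M+j) hk
      have hpos : (0:ℝ) < ((M+j:ℕ):ℝ) + 1 := by positivity
      have hfac : ((M+j:ℕ):ℝ) + 1 - b ≥ 0 := by linarith
      have hstep : (((M+j:ℕ):ℝ)+1-b)/(((M+j:ℕ):ℝ)+1) ≤ Real.exp (-(b/(((M:ℕ):ℝ)+j+1))) := by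
        have h1 : (((M+j:ℕ):ℝ)+1-b)/(((M+j:ℕ):ℝ)+1) = 1 + (-(b/(((M:ℕ):ℝ)+j+1))) := by
          push_cast
          field_simp
          ring
        rw [h1]
        have h2 := Real.add_one_le_exp (-(b/(((M:ℕ):ℝ)+j+1)))
        linarith
      have h3 : |genBinomR b (M+(j+1))| ≤
          (|genBinomR b M| * Real.exp (-(b * ∑ i ∈ Finset.range j, (1:ℝ)/(M+i+1))))
            * Real.exp (-(b/(((M:ℕ):ℝ)+j+1))) := by
        have : M + (j+1) = (M+j)+1 := by ring
        rw [this, hrec]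
        exact mul_le_mul ih hstep (div_nonneg hfac hpos.le) (by positivity)
      refine h3.trans_eq ?_
      rw [mul_assoc, ← Real.exp_add, Finset.sum_range_succ]
      congr 2
      ring
  -- the bound tends to 0
  have hH := Real.tendsto_sum_range_one_div_nat_succ_atTop
  have hS : Filter.Tendsto (fun j : ℕ => ∑ i ∈ Finset.range j, (1:ℝ)/(M+i+1))
      Filter.atTop Filter.atTop := by
    have heq : ∀ j : ℕ, ∑ i ∈ Finset.range j, (1:ℝ)/(M+i+1)
        = (∑ i ∈ Finset.range (M+j), (1:ℝ)/(i+1)) - ∑ i ∈ Finset.range M, (1:ℝ)/(i+1) := by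
      intro j
      rw [Finset.sum_range_add]
      have : ∀ i : ℕ, (1:ℝ)/(((M+i : ℕ) : ℝ) + 1) = 1/((M:ℝ)+i+1) := by
        intro i; push_cast; ring
      rw [Finset.sum_congr rfl (fun i _ => this i)]
      ring
    simp only [heq]
    apply Filter.tendsto_atTop_add_const_right
    have h1 : Filter.Tendsto (fun j : ℕ => M + j) Filter.atTop Filter.atTop := by
      simpa [add_comm] using Filter.tendsto_add_atTop_nat M
    exact hH.comp h1
  have hexp : Filter.Tendsto
      (fun j : ℕ => |genBinomR b M| * Real.exp (-(b * ∑ i ∈ Finset.range j, (1:ℝ)/(M+i+1))))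
      Filter.atTop (nhds 0) := by
    have h1 : Filter.Tendsto (fun j : ℕ => -(b * ∑ i ∈ Finset.range j, (1:ℝ)/(M+i+1)))
        Filter.atTop Filter.atBot :=
      Filter.tendsto_neg_atBot_iff.mpr (hS.const_mul_atTop hb)
    have h2 := Real.tendsto_exp_atBot.comp h1
    have h3 := h2.const_mul (|genBinomR b M|)
    simpa using h3
  have habs : Filter.Tendsto (fun j : ℕ => |genBinomR b (M+j)|) Filter.atTop (nhds 0) :=
    squeeze_zero (fun j => abs_nonneg _) key hexp
  have hshift : Filter.Tendsto (fun j : ℕ => genBinomR b (M+j)) Filter.atTop (nhds 0) :=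
    (tendsto_zero_iff_abs_tendsto_zero _).mpr habs
  have : Filter.Tendsto (fun j : ℕ => genBinomR b (j+M)) Filter.atTop (nhds 0) := by
    simpa [add_comm] using hshift
  exact (Filter.tendsto_add_atTop_iff_nat M).mp this

lemma abs_genBinomR_succ' (b : ℝ) (hb : 0 < b) (k : ℕ) (hk : b ≤ k) :
    ((k:ℝ)+1) * |genBinomR (b+1) (k+1)| = ((k:ℝ) - b) * |genBinomR (b+1) k| := by
  have h := abs_genBinomR_succ (b+1) k (by push_cast; linarith)
  rw [h]
  have hpos : (0:ℝ) < (k:ℝ)+1 := by positivity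
  field_simp
  ring

lemma summable_alt (b : ℝ) (hb : 0 < b) :
    Summable (fun k : ℕ => genBinomR (b+1) k * (-1)^k) := by
  apply Summable.of_abs
  set M := Nat.ceil b with hM
  have hbM : b ≤ M := Nat.le_ceil b
  set C : ℝ := (∑ k ∈ Finset.range M, |genBinomR (b+1) k * (-1)^k|)
      + (M:ℝ) * |genBinomR (b+1) M| / b with hC
  apply summable_of_sum_range_le (c := C) (fun k => abs_nonneg _)
  intro N
  have hsubset : ∑ k ∈ Finset.range N, |genBinomR (b+1) k * (-1)^k|
      ≤ ∑ k ∈ Finset.range (M+N), |genBinomR (b+1) k * (-1)^k| := by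
    apply Finset.sum_le_sum_of_subset_of_nonneg
    · exact Finset.range_subset_range.mpr (by omega)
    · intro i _ _; exact abs_nonneg _
  refine hsubset.trans ?_
  rw [Finset.sum_range_add]
  have htel : ∀ j : ℕ, b * |genBinomR (b+1) (M+j) * (-1)^(M+j)|
      = (((M+j:ℕ):ℝ) * |genBinomR (b+1) (M+j)|)
        - (((M+j+1:ℕ):ℝ) * |genBinomR (b+1) (M+j+1)|) := by
    intro j
    have hk : b ≤ ((M+j:ℕ):ℝ) := by
      have hj : (0:ℝ) ≤ (j:ℝ) := Nat.cast_nonneg j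
      push_cast
      linarith
    have h := abs_genBinomR_succ' b hb (M+j) hk
    rw [abs_mul]
    simp only [abs_pow, abs_neg, abs_one, one_pow, mul_one]
    push_cast at h ⊢
    linarith
  have htel' : b * ∑ j ∈ Finset.range N, |genBinomR (b+1) (M+j) * (-1)^(M+j)|
      = (M:ℝ) * |genBinomR (b+1) M| - ((M+N:ℕ):ℝ) * |genBinomR (b+1) (M+N)| := by
    rw [Finset.mul_sum]
    have hts := Finset.sum_range_sub' (fun j => (((M+j:ℕ)):ℝ) * |genBinomR (b+1) (M+j)|) N
    simp only [Nat.add_zero] at hts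
    rw [← hts]
    exact Finset.sum_congr rfl (fun j _ => htel j)
  have hfN : (0:ℝ) ≤ ((M+N:ℕ):ℝ) * |genBinomR (b+1) (M+N)| := by positivity
  have hsum2 : ∑ j ∈ Finset.range N, |genBinomR (b+1) (M+j) * (-1)^(M+j)|
      ≤ (M:ℝ) * |genBinomR (b+1) M| / b := by
    rw [le_div_iff₀ hb, mul_comm]
    linarith
  rw [hC]
  linarith [hsum2]

lemma hasSumA (b : ℝ) (hb : 0 < b) :
    HasSum (fun k : ℕ => genBinomR (b+1) k * (-1)^k) 0 := by
  rw [(summable_alt b hb).hasSum_iff_tendsto_nat]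
  have h1 : Filter.Tendsto (fun m : ℕ => genBinomR b m * (-1)^m) Filter.atTop (nhds 0) := by
    have hg := (tendsto_zero_iff_abs_tendsto_zero (fun m : ℕ => genBinomR b m)).mp
      (tendsto_genBinomR b hb)
    exact squeeze_zero_norm
      (fun m => by simp [Real.norm_eq_abs, Function.comp_def, abs_mul, abs_pow]) hg
  have h2 : Filter.Tendsto (fun m : ℕ => ∑ k ∈ Finset.range (m+1), genBinomR (b+1) k * (-1)^k)
      Filter.atTop (nhds 0) := by
    simp only [sum_alt]
    exact h1
  exact (Filter.tendsto_add_atTop_iff_nat 1).mp h2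

theorem stmt_8 (n : ℕ) (b : ℝ) (hb : 0 < b)
    (hne : ∀ k : ℕ, (n : ℝ) + b - k ≠ 0) :
    HasSum (fun k : ℕ => genBinomR b k * (-1) ^ k / ((n : ℝ) + b - k)) 0 := by
  induction n generalizing b with
  | zero =>
    have hA := (hasSumA b hb).div_const b
    rw [zero_div] at hA
    convert hA using 2 with k
    · rfl
    have hbk : ((0:ℕ):ℝ) + b - k ≠ 0 := hne k
    rw [Nat.cast_zero, zero_add] at hbk ⊢
    have key := genBinomR_mul b k
    field_simp
    linear_combination key
  | succ n ih =>
    have hb1 : (0:ℝ) < b + 1 := by linarith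
    have hne' : ∀ k : ℕ, (n:ℝ) + (b+1) - k ≠ 0 := by
      intro k
      have h := hne k
      push_cast at h ⊢
      intro hc; apply h; linarith
    have hIH := ih (b+1) hb1 hne'
    have hA := hasSumA b hb
    have hcomb := (hA.mul_left (1/b)).sub (hIH.mul_left (((n:ℝ)+1)/b))
    rw [mul_zero, mul_zero, sub_zero] at hcomb
    convert hcomb using 2 with k
    · rfl
    have hd : (n:ℝ) + (b+1) - k ≠ 0 := hne' k
    have hd2 : (n:ℝ) + 1 + b - k ≠ 0 := by intro hc; exact hd (by linarith)
    have hkey := genBinomR_mul b k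
    push_cast
    field_simp [hd, hd2]
    linear_combination ((n:ℝ)+1+b-k) * hkey
end

section
/- Let b > 1 and c > 0. The function Y_c(x) = (∫₀^x e^{ct}(1-e^{-t})^{b-1} dt) / (e^{cx}(1-e^{-x})^{b-1}) is increasing on (0, ∞). -/
open Real MeasureTheory intervalIntegral Set Filter Topology

noncomputable def gfun (b c t : ℝ) : ℝ := Real.exp (c * t) * (1 - Real.exp (-t)) ^ (b - 1)
noncomputable def hfun (b c t : ℝ) : ℝ := c + (b - 1) / (Real.exp t - 1)

lemma u_pos {t : ℝ} (ht : 0 < t) : 0 < 1 - Real.exp (-t) := by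
  have : Real.exp (-t) < 1 := Real.exp_lt_one_iff.mpr (by linarith)
  linarith

lemma u_nonneg {t : ℝ} (ht : 0 ≤ t) : 0 ≤ 1 - Real.exp (-t) := by
  have : Real.exp (-t) ≤ Real.exp 0 := Real.exp_le_exp.mpr (by linarith)
  rw [Real.exp_zero] at this; linarith

lemma expt_sub_one_pos {t : ℝ} (ht : 0 < t) : 0 < Real.exp t - 1 := by
  have : (1:ℝ) < Real.exp t := by rw [← Real.exp_zero]; exact Real.exp_lt_exp.mpr ht
  linarith

lemma g_cont {b c : ℝ} (hb : 1 < b) : Continuous (gfun b c) := by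
  unfold gfun
  exact (Real.continuous_exp.comp (continuous_const.mul continuous_id)).mul
    ((continuous_const.sub (Real.continuous_exp.comp continuous_neg)).rpow_const
      fun t => Or.inr (by linarith))

lemma g_pos {b c t : ℝ} (ht : 0 < t) : 0 < gfun b c t :=
  mul_pos (Real.exp_pos _) (Real.rpow_pos_of_pos (u_pos ht) _)

lemma h_pos {b c t : ℝ} (hb : 1 < b) (hc : 0 < c) (ht : 0 < t) : 0 < hfun b c t := by
  unfold hfun
  have h1 := expt_sub_one_pos ht
  have h2 : 0 ≤ (b - 1) / (Real.exp t - 1) := div_nonneg (by linarith) h1.le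
  linarith

lemma h_anti {b c s t : ℝ} (hb : 1 < b) (hs : 0 < s) (hst : s < t) :
    hfun b c t < hfun b c s := by
  unfold hfun
  have h1 := expt_sub_one_pos hs
  have h2 : Real.exp s - 1 < Real.exp t - 1 := by
    have := Real.exp_lt_exp.mpr hst; linarith
  have := div_lt_div_of_pos_left (by linarith : (0:ℝ) < b - 1) h1 h2
  linarith

lemma h_contOn {b c : ℝ} : ContinuousOn (hfun b c) (Set.Ioi 0) := by
  unfold hfun
  exact continuousOn_const.add (continuousOn_const.div
    ((Real.continuous_exp.sub continuous_const).continuousOn)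
    fun t ht => (expt_sub_one_pos ht).ne')

lemma g_deriv {b c t : ℝ} (hb : 1 < b) (ht : 0 < t) :
    HasDerivAt (gfun b c) (gfun b c t * hfun b c t) t := by
  have hup := u_pos ht
  have hu : HasDerivAt (fun t : ℝ => 1 - Real.exp (-t)) (Real.exp (-t)) t := by
    have h1 : HasDerivAt (fun t : ℝ => Real.exp (-t)) (-Real.exp (-t)) t := by
      simpa [Function.comp_def] using (Real.hasDerivAt_exp (-t)).comp t (hasDerivAt_neg t)
    simpa using h1.const_sub (1:ℝ)
  have h2 := hu.rpow_const (p := b - 1) (Or.inl hup.ne')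
  have h3 : HasDerivAt (fun t : ℝ => Real.exp (c * t)) (c * Real.exp (c * t)) t := by
    simpa [mul_comm, Function.comp_def] using (Real.hasDerivAt_exp (c * t)).comp t ((hasDerivAt_id t).const_mul c)
  have h4 := h3.mul h2
  refine HasDerivAt.congr_deriv (f := gfun b c) h4 (Eq.symm ?_)
  unfold gfun hfun
  have e1 : Real.exp t - 1 = Real.exp t * (1 - Real.exp (-t)) := by
    rw [mul_sub, mul_one, ← Real.exp_add]; simp
  have e2 : (1 - Real.exp (-t)) ^ (b - 1) =
      (1 - Real.exp (-t)) ^ (b - 1 - 1) * (1 - Real.exp (-t)) := by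
    rw [Real.rpow_sub_one hup.ne' (b - 1), div_mul_cancel₀ _ hup.ne']
  have hEe : Real.exp (-t) * Real.exp t = 1 := by rw [← Real.exp_add]; simp
  have e4 : (b - 1) / (Real.exp t - 1) * (1 - Real.exp (-t)) ^ (b - 1)
      = Real.exp (-t) * (b - 1) * (1 - Real.exp (-t)) ^ (b - 1 - 1) := by
    rw [e2, e1, div_mul_eq_mul_div, div_eq_iff
      (mul_ne_zero (Real.exp_ne_zero t) hup.ne')]
    linear_combination
      (-((b - 1) * (1 - Real.exp (-t)) ^ (b - 1 - 1) * (1 - Real.exp (-t)))) * hEe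
  calc Real.exp (c * t) * (1 - Real.exp (-t)) ^ (b - 1)
        * (c + (b - 1) / (Real.exp t - 1))
      = c * Real.exp (c * t) * (1 - Real.exp (-t)) ^ (b - 1)
        + Real.exp (c * t)
          * ((b - 1) / (Real.exp t - 1) * (1 - Real.exp (-t)) ^ (b - 1)) := by ring
    _ = c * Real.exp (c * t) * (1 - Real.exp (-t)) ^ (b - 1) +
          Real.exp (c * t)
            * (Real.exp (-t) * (b - 1) * (1 - Real.exp (-t)) ^ (b - 1 - 1)) := by rw [e4]

lemma gh_intble {b c p q : ℝ} (hb : 1 < b) (hp : 0 < p) (hpq : p ≤ q) :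
    IntervalIntegrable (fun t => gfun b c t * hfun b c t) volume p q := by
  apply ContinuousOn.intervalIntegrable
  rw [Set.uIcc_of_le hpq]
  exact ((g_cont hb).continuousOn).mul
    (h_contOn.mono fun t htm => lt_of_lt_of_le hp htm.1)

lemma ftc {b c p q : ℝ} (hb : 1 < b) (hp : 0 < p) (hpq : p ≤ q) :
    ∫ t in p..q, gfun b c t * hfun b c t = gfun b c q - gfun b c p := by
  apply intervalIntegral.integral_eq_sub_of_hasDerivAt
  · intro t htm
    rw [Set.uIcc_of_le hpq] at htm
    exact g_deriv hb (lt_of_lt_of_le hp htm.1)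
  · exact gh_intble hb hp hpq

lemma key2 {b c x y : ℝ} (hb : 1 < b) (hc : 0 < c) (hx : 0 < x) (hxy : x < y) :
    gfun b c y - gfun b c x < hfun b c x * ∫ t in x..y, gfun b c t := by
  rw [← ftc hb hx hxy.le, ← intervalIntegral.integral_const_mul]
  apply intervalIntegral.integral_lt_integral_of_continuousOn_of_le_of_exists_lt hxy
  · exact (((g_cont hb).continuousOn).mul
      (h_contOn.mono fun t htm => lt_of_lt_of_le hx htm.1))
  · exact (continuous_const.mul (g_cont hb)).continuousOn
  · intro t htm
    have ht0 : 0 < t := hx.trans htm.1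
    have hhle : hfun b c t ≤ hfun b c x := (h_anti hb hx htm.1).le
    have := g_pos (b := b) (c := c) ht0
    nlinarith
  · refine ⟨y, ⟨hxy.le, le_refl y⟩, ?_⟩
    have hhlt : hfun b c y < hfun b c x := h_anti hb hx hxy
    have := g_pos (b := b) (c := c) (hx.trans hxy)
    nlinarith

lemma key3 {b c x : ℝ} (hb : 1 < b) (hc : 0 < c) (hx : 0 < x) :
    hfun b c x * (∫ t in (0:ℝ)..x, gfun b c t) ≤ gfun b c x := by
  have hcg := g_cont (c := c) hb
  have hhx := h_pos (c := c) hb hc hx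
  have hM : ∀ ε ∈ Set.Ioo (0:ℝ) x,
      hfun b c x * (∫ t in (0:ℝ)..x, gfun b c t) - gfun b c x
        ≤ hfun b c x * (Real.exp (c * x) * ε) := by
    rintro ε ⟨hε0, hεx⟩
    have split : (∫ t in (0:ℝ)..x, gfun b c t) =
        (∫ t in (0:ℝ)..ε, gfun b c t) + ∫ t in ε..x, gfun b c t :=
      (intervalIntegral.integral_add_adjacent_intervals
        (hcg.intervalIntegrable _ _) (hcg.intervalIntegrable _ _)).symm
    have hFb : (∫ t in (0:ℝ)..ε, gfun b c t) ≤ Real.exp (c * x) * ε := by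
      have h1 : (∫ t in (0:ℝ)..ε, gfun b c t) ≤ ∫ t in (0:ℝ)..ε, Real.exp (c * x) := by
        apply intervalIntegral.integral_mono_on hε0.le (hcg.intervalIntegrable _ _)
          intervalIntegrable_const
        intro t htm
        unfold gfun
        have hu1 : (1 - Real.exp (-t)) ^ (b - 1) ≤ 1 :=
          Real.rpow_le_one (u_nonneg htm.1) (by have := Real.exp_pos (-t); linarith)
            (by linarith)
        have he : Real.exp (c * t) ≤ Real.exp (c * x) :=
          Real.exp_le_exp.mpr (by nlinarith [htm.2, hεx.le])
        calc Real.exp (c * t) * (1 - Real.exp (-t)) ^ (b - 1)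
            ≤ Real.exp (c * x) * 1 :=
              mul_le_mul he hu1 (Real.rpow_nonneg (u_nonneg htm.1) _) (Real.exp_pos _).le
          _ = Real.exp (c * x) := by ring
      calc (∫ t in (0:ℝ)..ε, gfun b c t) ≤ ∫ t in (0:ℝ)..ε, Real.exp (c * x) := h1
        _ = Real.exp (c * x) * ε := by simp [mul_comm]
    have hIneq : hfun b c x * (∫ t in ε..x, gfun b c t) ≤ gfun b c x - gfun b c ε := by
      rw [← ftc hb hε0 hεx.le, ← intervalIntegral.integral_const_mul]
      apply intervalIntegral.integral_mono_on hεx.le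
        ((continuous_const.mul hcg).intervalIntegrable _ _) (gh_intble hb hε0 hεx.le)
      intro t htm
      have ht0 : 0 < t := lt_of_lt_of_le hε0 htm.1
      have hhle : hfun b c x ≤ hfun b c t := by
        rcases eq_or_lt_of_le htm.2 with h | h
        · rw [h]
        · exact (h_anti hb ht0 h).le
      have := g_pos (b := b) (c := c) ht0
      show hfun b c x * gfun b c t ≤ gfun b c t * hfun b c t
      nlinarith
    have hgε : 0 ≤ gfun b c ε := (g_pos hε0).le
    have h5 : hfun b c x * (∫ t in (0:ℝ)..ε, gfun b c t) ≤
        hfun b c x * (Real.exp (c * x) * ε) := mul_le_mul_of_nonneg_left hFb hhx.le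
    rw [split]
    nlinarith
  have hT : Tendsto (fun ε : ℝ => hfun b c x * (Real.exp (c * x) * ε)) (𝓝[>] (0:ℝ)) (𝓝 0) := by
    have hcont : Continuous fun ε : ℝ => hfun b c x * (Real.exp (c * x) * ε) := by continuity
    have h0 := hcont.tendsto 0
    rw [mul_zero, mul_zero] at h0
    exact h0.mono_left nhdsWithin_le_nhds
  have hEv : ∀ᶠ ε in 𝓝[>] (0:ℝ),
      hfun b c x * (∫ t in (0:ℝ)..x, gfun b c t) - gfun b c x
        ≤ hfun b c x * (Real.exp (c * x) * ε) := by
    filter_upwards [Ioo_mem_nhdsGT_of_mem ⟨le_refl (0:ℝ), hx⟩] with ε hε using hM ε hε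
  have := ge_of_tendsto hT hEv
  linarith

theorem stmt_10 (b c : ℝ) (hb : 1 < b) (hc : 0 < c) :
    StrictMonoOn
      (fun x : ℝ =>
        (∫ t in Set.Ioo (0 : ℝ) x, Real.exp (c * t) * (1 - Real.exp (-t)) ^ (b - 1)) /
          (Real.exp (c * x) * (1 - Real.exp (-x)) ^ (b - 1)))
      (Set.Ioi 0) := by
  intro x hx y hy hxy
  rw [Set.mem_Ioi] at hx hy
  have hcg := g_cont (c := c) hb
  have key : ∀ z : ℝ, 0 ≤ z →
      (∫ t in Set.Ioo (0 : ℝ) z, Real.exp (c * t) * (1 - Real.exp (-t)) ^ (b - 1))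
        = ∫ t in (0:ℝ)..z, gfun b c t := by
    intro z hz
    rw [intervalIntegral.integral_of_le hz, MeasureTheory.integral_Ioc_eq_integral_Ioo]
    rfl
  show (∫ t in Set.Ioo (0 : ℝ) x, Real.exp (c * t) * (1 - Real.exp (-t)) ^ (b - 1)) /
      gfun b c x <
    (∫ t in Set.Ioo (0 : ℝ) y, Real.exp (c * t) * (1 - Real.exp (-t)) ^ (b - 1)) /
      gfun b c y
  rw [key x hx.le, key y hy.le]
  have gx := g_pos (b := b) (c := c) hx
  have gy := g_pos (b := b) (c := c) hy
  have hA : 0 < ∫ t in (0:ℝ)..x, gfun b c t :=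
    intervalIntegral_pos_of_pos_on (hcg.intervalIntegrable _ _)
      (fun t ht => g_pos ht.1) hx
  have hB : 0 < ∫ t in x..y, gfun b c t :=
    intervalIntegral_pos_of_pos_on (hcg.intervalIntegrable _ _)
      (fun t ht => g_pos (hx.trans ht.1)) hxy
  have hsplit : (∫ t in (0:ℝ)..y, gfun b c t) =
      (∫ t in (0:ℝ)..x, gfun b c t) + ∫ t in x..y, gfun b c t :=
    (intervalIntegral.integral_add_adjacent_intervals
      (hcg.intervalIntegrable _ _) (hcg.intervalIntegrable _ _)).symm
  have h1 := key2 (b := b) (c := c) hb hc hx hxy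
  have h2 := key3 (b := b) (c := c) hb hc hx
  rw [div_lt_div_iff₀ gx gy, hsplit]
  nlinarith [mul_lt_mul_of_pos_left h1 hA,
    mul_le_mul_of_nonneg_right h2 hB.le]
end

section
/- Let I, J ⊂ ℝ be open intervals and f : I × J → (0,∞) with x ↦ f(a,x) integrable for each a, a ↦ f(a,x) differentiable, ∂_a f locally dominated by an integrable function, and the logarithmic derivative ∂_a f(a,x)/f(a,x) increasing in x. Then for each p ∈ (0,1), the p-quantile q(a) of the distribution with density f(a,·)/∫_J f(a,t)dt is increasing in a. -/
open Real MeasureTheory Set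

theorem stmt_13 (I J : Set ℝ) (hI : IsOpen I) (hIc : Convex ℝ I)
    (hJ : IsOpen J) (hJc : Convex ℝ J)
    (f : ℝ → ℝ → ℝ)
    (hpos : ∀ a ∈ I, ∀ x ∈ J, 0 < f a x)
    (hint : ∀ a ∈ I, IntegrableOn (f a) J)
    (hdiff : ∀ x ∈ J, ∀ a ∈ I, DifferentiableAt ℝ (fun a' => f a' x) a)
    (hdom : ∀ K ⊆ I, IsCompact K → ∃ g : ℝ → ℝ, IntegrableOn g J ∧
      ∀ a ∈ K, ∀ x ∈ J, |deriv (fun a' => f a' x) a| ≤ g x)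
    (hlog : ∀ a ∈ I, MonotoneOn (fun x => deriv (fun a' => f a' x) a / f a x) J)
    (p : ℝ) (hp : p ∈ Set.Ioo (0 : ℝ) 1)
    (q : ℝ → ℝ)
    (hq : ∀ a ∈ I, q a ∈ J ∧
      (∫ t in J ∩ Set.Iic (q a), f a t) = p * ∫ t in J, f a t) :
    MonotoneOn q I := by
  intro a ha b hb hab
  rcases eq_or_lt_of_le hab with rfl | hab
  · exact le_refl _
  by_contra hqba
  push_neg at hqba
  obtain ⟨hqaJ, hqa⟩ := hq a ha
  obtain ⟨hqbJ, hqb⟩ := hq b hb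
  have hIccI : Icc a b ⊆ I := hIc.ordConnected.out ha hb
  -- monotone likelihood ratio
  have mlr : ∀ x ∈ J, ∀ y ∈ J, x ≤ y → f b x * f a y ≤ f a x * f b y := by
    intro x hx y hy hxy
    have hds : ∀ s ∈ I, ∀ z ∈ J,
        HasDerivAt (fun s' => Real.log (f s' z)) (deriv (fun s' => f s' z) s / f s z) s :=
      fun s hs z hz => ((hdiff z hz s hs).hasDerivAt).log (ne_of_gt (hpos s hs z hz))
    set Φ : ℝ → ℝ := fun s => Real.log (f s y) - Real.log (f s x) with hΦ
    have hΦd : ∀ s ∈ I, HasDerivAt Φ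
        (deriv (fun s' => f s' y) s / f s y - deriv (fun s' => f s' x) s / f s x) s :=
      fun s hs => (hds s hs y hy).sub (hds s hs x hx)
    have hmono : MonotoneOn Φ (Icc a b) := by
      apply monotoneOn_of_deriv_nonneg (convex_Icc a b)
      · exact fun s hs => ((hΦd s (hIccI hs)).differentiableAt).continuousAt.continuousWithinAt
      · intro s hs
        rw [interior_Icc] at hs
        exact ((hΦd s (hIccI (Ioo_subset_Icc_self hs))).differentiableAt).differentiableWithinAt
      · intro s hs
        rw [interior_Icc] at hs
        have hsI : s ∈ I := hIccI (Ioo_subset_Icc_self hs)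
        rw [(hΦd s hsI).deriv]
        have := hlog s hsI hx hy hxy
        simpa using sub_nonneg.mpr this
    have hab' : Φ a ≤ Φ b := hmono (left_mem_Icc.mpr hab.le) (right_mem_Icc.mpr hab.le) hab.le
    have h1 : Real.log (f b x * f a y) ≤ Real.log (f a x * f b y) := by
      rw [Real.log_mul (ne_of_gt (hpos b hb x hx)) (ne_of_gt (hpos a ha y hy)),
        Real.log_mul (ne_of_gt (hpos a ha x hx)) (ne_of_gt (hpos b hb y hy))]
      simp only [hΦ] at hab'
      linarith
    exact (Real.log_le_log_iff (mul_pos (hpos b hb x hx) (hpos a ha y hy))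
      (mul_pos (hpos a ha x hx) (hpos b hb y hy))).mp h1
  -- notation
  set c := q a with hc
  set A : Set ℝ := J ∩ Iic c with hA
  set B : Set ℝ := J ∩ Ioi c with hB
  have hAm : MeasurableSet A := (hJ.measurableSet).inter measurableSet_Iic
  have hBm : MeasurableSet B := (hJ.measurableSet).inter measurableSet_Ioi
  have hAsub : A ⊆ J := inter_subset_left
  have hBsub : B ⊆ J := inter_subset_left
  have hintA : ∀ u ∈ I, IntegrableOn (f u) A := fun u hu => (hint u hu).mono_set hAsub
  have hintB : ∀ u ∈ I, IntegrableOn (f u) B := fun u hu => (hint u hu).mono_set hBsub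
  have hsplit : ∀ u ∈ I, (∫ t in J, f u t) = (∫ t in A, f u t) + (∫ t in B, f u t) := by
    intro u hu
    rw [← setIntegral_union (by simp [hA, hB, disjoint_left]; intro z hz h1 h2; linarith)
      hBm (hintA u hu) (hintB u hu)]
    congr 1
    rw [hA, hB, ← inter_union_distrib_left, Iic_union_Ioi, inter_univ]
  -- pointwise FOSD step
  have key : (∫ x in A, f b x) * (∫ y in B, f a y) ≤ (∫ x in A, f a x) * (∫ y in B, f b y) := by
    have step1 : ∀ x ∈ A, f b x * (∫ y in B, f a y) ≤ f a x * (∫ y in B, f b y) := by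
      intro x hx
      rw [← integral_const_mul, ← integral_const_mul]
      apply setIntegral_mono_on ((hintB a ha).const_mul _) ((hintB b hb).const_mul _) hBm
      intro y hy
      exact mlr x (hAsub hx) y (hBsub hy) (le_trans hx.2 (le_of_lt hy.2))
    calc (∫ x in A, f b x) * (∫ y in B, f a y) = ∫ x in A, f b x * (∫ y in B, f a y) := by
            rw [integral_mul_const]
      _ ≤ ∫ x in A, f a x * (∫ y in B, f b y) := by
            apply setIntegral_mono_on ((hintA b hb).mul_const _) ((hintA a ha).mul_const _) hAm step1
      _ = (∫ x in A, f a x) * (∫ y in B, f b y) := integral_mul_const _ _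
  -- positivity facts
  have pos_int : ∀ u ∈ I, ∀ s ⊆ J, MeasurableSet s → 0 < volume s → 0 < ∫ t in s, f u t := by
    intro u hu s hsJ hsm hμ
    have hnn : (0 : ℝ → ℝ) ≤ᶠ[ae (volume.restrict s)] f u :=
      (ae_restrict_iff' hsm).mpr (Filter.Eventually.of_forall
        fun t ht => le_of_lt (hpos u hu t (hsJ ht)))
    rw [setIntegral_pos_iff_support_of_nonneg_ae hnn ((hint u hu).mono_set hsJ)]
    · refine lt_of_lt_of_le hμ (measure_mono ?_)
      intro t ht
      exact ⟨ne_of_gt (hpos u hu t (hsJ ht)), ht⟩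
  have hCa : 0 < ∫ t in J, f a t :=
    pos_int a ha J (subset_refl _) hJ.measurableSet (hJ.measure_pos volume ⟨c, hqaJ⟩)
  -- strict increase of ∫_{J ∩ Iic} f b between q b and q a = c
  have hIocJ : Ioc (q b) c ⊆ J := fun z hz =>
    hJc.ordConnected.out hqbJ hqaJ ⟨le_of_lt hz.1, hz.2⟩
  have hIocpos : 0 < ∫ t in Ioc (q b) c, f b t :=
    pos_int b hb _ hIocJ measurableSet_Ioc (by rw [Real.volume_Ioc]; simp [hqba])
  have hsplit2 : (∫ t in A, f b t) = (∫ t in J ∩ Iic (q b), f b t) + (∫ t in Ioc (q b) c, f b t) := by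
    have hAeq : A = (J ∩ Iic (q b)) ∪ Ioc (q b) c := by
      rw [hA]
      ext z
      constructor
      · rintro ⟨hzJ, hz⟩
        rcases le_or_gt z (q b) with h | h
        · exact Or.inl ⟨hzJ, h⟩
        · exact Or.inr ⟨h, hz⟩
      · rintro (⟨hzJ, hz⟩ | ⟨h1, h2⟩)
        · exact ⟨hzJ, le_trans hz hqba.le⟩
        · exact ⟨hIocJ ⟨h1, h2⟩, h2⟩
    rw [hAeq, setIntegral_union (by simp [disjoint_left]; intro z hz h1 h2; linarith)
      measurableSet_Ioc ((hint b hb).mono_set inter_subset_left)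
      ((hint b hb).mono_set hIocJ)]
  -- combine
  have hBa : (∫ y in B, f a y) = (1 - p) * ∫ t in J, f a t := by
    have := hsplit a ha
    linarith [hqa]
  have hAa : (∫ x in A, f a x) = p * ∫ t in J, f a t := hqa
  have hBb : (∫ y in B, f b y) = (∫ t in J, f b t) - (∫ x in A, f b x) := by
    have := hsplit b hb; linarith
  have hub : (∫ x in A, f b x) ≤ p * ∫ t in J, f b t := by
    rw [hBa, hAa, hBb] at key
    nlinarith [hCa, hp.1, hp.2]
  have hlb : p * (∫ t in J, f b t) < ∫ x in A, f b x := by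
    rw [hsplit2, ← hqb]
    linarith
  linarith
end

section
/- Let F_n : ℝ∪{±∞} → [0,1] be cumulative distribution functions (extended by F_n(-∞)=0, F_n(+∞)=1), with F_n(q_n) = p ∈ (0,1), F_n converging pointwise to F_∞, and q_n → q_∞ in the extended reals. Then sup{x : F_∞(x) < p} ≤ q_∞ ≤ inf{x : F_∞(x) > p}. In particular, if F_∞ is continuous then F_∞(q_∞) = p. -/
open Filter Topology

theorem stmt_15 (F : ℕ → EReal → ℝ) (Finf : EReal → ℝ)
    (hmono : ∀ n, Monotone (F n))
    (hrange : ∀ n, ∀ x, F n x ∈ Set.Icc (0 : ℝ) 1)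
    (hbot : ∀ n, F n ⊥ = 0) (htop : ∀ n, F n ⊤ = 1)
    (p : ℝ) (hp : p ∈ Set.Ioo (0 : ℝ) 1)
    (q : ℕ → EReal) (hq : ∀ n, F n (q n) = p)
    (hconv : ∀ x, Tendsto (fun n => F n x) atTop (𝓝 (Finf x)))
    (qinf : EReal) (hqconv : Tendsto q atTop (𝓝 qinf)) :
    sSup {x : EReal | Finf x < p} ≤ qinf ∧
    qinf ≤ sInf {x : EReal | p < Finf x} ∧
    (Continuous Finf → Finf qinf = p) := by
  have hFbot : Finf ⊥ = 0 := by
    refine tendsto_nhds_unique (hconv ⊥) ?_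
    simpa [hbot] using (tendsto_const_nhds : Tendsto (fun _ : ℕ => (0:ℝ)) atTop (𝓝 0))
  have hFtop : Finf ⊤ = 1 := by
    refine tendsto_nhds_unique (hconv ⊤) ?_
    simpa [htop] using (tendsto_const_nhds : Tendsto (fun _ : ℕ => (1:ℝ)) atTop (𝓝 1))
  have hsup : sSup {x : EReal | Finf x < p} ≤ qinf := by
    refine sSup_le fun x hx => ?_
    have hev : ∀ᶠ n in atTop, F n x < p := (hconv x).eventually_lt_const hx
    have hle : ∀ᶠ n in atTop, x ≤ q n := by
      filter_upwards [hev] with n hn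
      exact ((hmono n).reflect_lt (by rw [hq n]; exact hn)).le
    exact ge_of_tendsto hqconv hle
  have hinf : qinf ≤ sInf {x : EReal | p < Finf x} := by
    refine le_sInf fun x hx => ?_
    have hev : ∀ᶠ n in atTop, p < F n x := (hconv x).eventually_const_lt hx
    have hle : ∀ᶠ n in atTop, q n ≤ x := by
      filter_upwards [hev] with n hn
      exact ((hmono n).reflect_lt (by rw [hq n]; exact hn)).le
    exact le_of_tendsto hqconv hle
  refine ⟨hsup, hinf, fun hcont => ?_⟩
  rcases lt_trichotomy (Finf qinf) p with h | h | h
  · -- Finf qinf < p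
    have hne : qinf ≠ ⊤ := by
      rintro rfl
      rw [hFtop] at h; exact absurd hp.2 (not_lt.2 h.le)
    have hnb : NeBot (𝓝[>] qinf) :=
      nhdsGT_neBot_of_exists_gt ⟨⊤, hne.lt_top⟩
    have hopen : IsOpen {x : EReal | Finf x < p} :=
      isOpen_lt hcont continuous_const
    have : {x : EReal | Finf x < p} ∈ 𝓝[>] qinf :=
      mem_nhdsWithin_of_mem_nhds (hopen.mem_nhds h)
    obtain ⟨x, hx, hx'⟩ := hnb.nonempty_of_mem (inter_mem this self_mem_nhdsWithin)
    exact absurd (le_sSup hx |>.trans hsup) (not_le.2 hx')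
  · exact h
  · -- p < Finf qinf
    have hne : qinf ≠ ⊥ := by
      rintro rfl
      rw [hFbot] at h; exact absurd hp.1 (not_lt.2 h.le)
    have hnb : NeBot (𝓝[<] qinf) :=
      nhdsWithin_Iio_self_neBot' ⟨⊥, Ne.bot_lt hne⟩
    have hopen : IsOpen {x : EReal | p < Finf x} :=
      isOpen_lt continuous_const hcont
    have : {x : EReal | p < Finf x} ∈ 𝓝[<] qinf :=
      mem_nhdsWithin_of_mem_nhds (hopen.mem_nhds h)
    obtain ⟨x, hx, hx'⟩ := hnb.nonempty_of_mem (inter_mem this self_mem_nhdsWithin)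
    exact absurd (hinf.trans (sInf_le hx)) (not_le.2 hx')
end

section
/- Fix p ∈ (0,1) and b > 0, and let q(a) ∈ (0,1) be defined by ∫₀^{q(a)} t^{a-1}(1-t)^{b-1} dt = p·∫₀^1 t^{a-1}(1-t)^{b-1} dt. Then q is strictly increasing on (0,∞), with lim_{a→0} q(a) = 0 and lim_{a→∞} q(a) = 1. -/
open Real MeasureTheory Filter Topology Set

lemma beta_integrableOn {a b : ℝ} (ha : 0 < a) (hb : 0 < b) :
    IntegrableOn (fun t : ℝ => t ^ (a-1) * (1-t) ^ (b-1)) (Ioo 0 1) := by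
  have hc : IntervalIntegrable (fun x : ℝ =>
      (x : ℂ) ^ ((a : ℂ) - 1) * ((1 : ℂ) - x) ^ ((b : ℂ) - 1)) volume 0 1 :=
    Complex.betaIntegral_convergent (by simpa using ha) (by simpa using hb)
  rw [intervalIntegrable_iff_integrableOn_Ioo_of_le (by norm_num)] at hc
  have := hc.re
  refine (integrable_congr ?_).mp this
  filter_upwards [ae_restrict_mem measurableSet_Ioo] with t ht
  obtain ⟨ht0, ht1⟩ := ht
  have h1 : (t : ℂ) ^ ((a : ℂ) - 1) = ((t ^ (a-1) : ℝ) : ℂ) := by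
    rw [show ((a:ℂ) - 1) = ((a-1 : ℝ) : ℂ) by push_cast; ring,
      ← Complex.ofReal_cpow ht0.le]
  have h2 : ((1 : ℂ) - t) ^ ((b : ℂ) - 1) = (((1 - t) ^ (b-1) : ℝ) : ℂ) := by
    rw [show ((b:ℂ) - 1) = ((b-1 : ℝ) : ℂ) by push_cast; ring,
      show ((1:ℂ) - t) = ((1 - t : ℝ) : ℂ) by push_cast; ring,
      ← Complex.ofReal_cpow (by linarith)]
  simp [h1, h2, ← Complex.ofReal_mul]

lemma oneSub_integrableOn {b : ℝ} (hb : 0 < b) :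
    IntegrableOn (fun t : ℝ => (1-t) ^ (b-1)) (Ioo 0 1) := by
  have := beta_integrableOn one_pos hb
  refine (integrable_congr ?_).mp this
  filter_upwards with t
  norm_num

lemma intpos {g : ℝ → ℝ} {u v : ℝ} (huv : u < v)
    (hint : IntegrableOn g (Ioo u v)) (hpos : ∀ t ∈ Ioo u v, 0 < g t) :
    0 < ∫ t in Ioo u v, g t := by
  rw [setIntegral_pos_iff_support_of_nonneg_ae ?nn hint]
  case nn =>
    filter_upwards [ae_restrict_mem measurableSet_Ioo] with t ht using (hpos t ht).le
  have : Ioo u v ⊆ Function.support g ∩ Ioo u v :=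
    fun t ht => ⟨(hpos t ht).ne', ht⟩
  calc (0:ENNReal) < volume (Ioo u v) := by simp [huv]
    _ ≤ _ := measure_mono this

lemma intsplit {g : ℝ → ℝ} {u w v : ℝ} (h1 : u ≤ w) (h2 : w ≤ v)
    (hint : IntegrableOn g (Ioo u v)) :
    ∫ t in Ioo u v, g t = (∫ t in Ioo u w, g t) + ∫ t in Ioo w v, g t := by
  rcases eq_or_lt_of_le h1 with rfl | h1
  · simp
  have hsub1 : Ioo u w ⊆ Ioo u v := Ioo_subset_Ioo le_rfl h2
  have hsub2 : Ico w v ⊆ Ioo u v := fun t ht => ⟨lt_of_lt_of_le h1 ht.1, ht.2⟩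
  rw [← Ioo_union_Ico_eq_Ioo h1 h2, setIntegral_union, integral_Ico_eq_integral_Ioo]
  · exact Set.disjoint_left.2 fun t ht1 ht2 => absurd ht2.1 (not_le.2 ht1.2)
  · exact measurableSet_Ico
  · exact hint.mono_set hsub1
  · exact hint.mono_set hsub2

lemma fpos {a b : ℝ} {t : ℝ} (ht : t ∈ Ioo (0:ℝ) 1) :
    0 < t ^ (a-1) * (1-t) ^ (b-1) :=
  mul_pos (rpow_pos_of_pos ht.1 _) (rpow_pos_of_pos (by linarith [ht.2]) _)

lemma Fmono {a b u v : ℝ} (ha : 0 < a) (hb : 0 < b) (hu : 0 ≤ u) (huv : u ≤ v)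
    (hv : v ≤ 1) :
    (∫ t in Ioo (0:ℝ) u, t^(a-1)*(1-t)^(b-1)) ≤ ∫ t in Ioo (0:ℝ) v, t^(a-1)*(1-t)^(b-1) := by
  rw [intsplit hu huv ((beta_integrableOn ha hb).mono_set (Ioo_subset_Ioo le_rfl hv))]
  have : 0 ≤ ∫ t in Ioo u v, t^(a-1)*(1-t)^(b-1) := by
    refine setIntegral_nonneg measurableSet_Ioo fun t ht => ?_
    exact (fpos ⟨lt_of_le_of_lt hu ht.1, lt_of_lt_of_le ht.2 hv⟩).le
  linarith

lemma Gneg {b : ℝ} (hb : 0 < b) {a1 a2 : ℝ} (h1 : 0 < a1) (h12 : a1 < a2)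
    {x : ℝ} (hx : x ∈ Ioo (0:ℝ) 1) :
    (∫ t in Ioo (0:ℝ) 1, t^(a1-1)*(1-t)^(b-1)) * (∫ t in Ioo (0:ℝ) x, t^(a2-1)*(1-t)^(b-1))
    < (∫ t in Ioo (0:ℝ) 1, t^(a2-1)*(1-t)^(b-1)) * (∫ t in Ioo (0:ℝ) x, t^(a1-1)*(1-t)^(b-1)) := by
  have h2 : 0 < a2 := h1.trans h12
  set B1 := ∫ t in Ioo (0:ℝ) 1, t^(a1-1)*(1-t)^(b-1) with hB1def
  set B2 := ∫ t in Ioo (0:ℝ) 1, t^(a2-1)*(1-t)^(b-1) with hB2def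
  have hI1 : IntegrableOn (fun t : ℝ => t^(a1-1)*(1-t)^(b-1)) (Ioo 0 1) := beta_integrableOn h1 hb
  have hI2 : IntegrableOn (fun t : ℝ => t^(a2-1)*(1-t)^(b-1)) (Ioo 0 1) := beta_integrableOn h2 hb
  have hB1 : 0 < B1 := intpos one_pos hI1 fun t ht => fpos ht
  have hB2 : 0 < B2 := intpos one_pos hI2 fun t ht => fpos ht
  have hB21 : B2 < B1 := by
    have : 0 < ∫ t in Ioo (0:ℝ) 1, (t^(a1-1)*(1-t)^(b-1) - t^(a2-1)*(1-t)^(b-1)) := by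
      refine intpos one_pos (hI1.sub hI2) fun t ht => ?_
      have : t^(a2-1) < t^(a1-1) := rpow_lt_rpow_of_exponent_gt ht.1 ht.2 (by linarith)
      nlinarith [rpow_pos_of_pos (show (0:ℝ) < 1 - t by linarith [ht.2]) (b-1)]
    rw [integral_sub hI1 hI2] at this
    linarith
  set d := a2 - a1 with hddef
  have hd : 0 < d := by simp [hddef]; linarith
  set s := (B2/B1) ^ (1/d) with hsdef
  have hs0 : 0 < s := rpow_pos_of_pos (div_pos hB2 hB1) _
  have hs1 : s < 1 := rpow_lt_one (div_pos hB2 hB1).le ((div_lt_one hB1).2 hB21) (by positivity)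
  have hsd : s ^ d = B2 / B1 := by
    rw [hsdef, ← rpow_mul (div_pos hB2 hB1).le, one_div_mul_cancel hd.ne', rpow_one]
  have key : ∀ t ∈ Ioo (0:ℝ) 1,
      B1 * (t^(a2-1)*(1-t)^(b-1)) - B2 * (t^(a1-1)*(1-t)^(b-1))
        = (t^(a1-1)*(1-t)^(b-1)) * (B1 * t ^ d - B2) := by
    intro t ht
    have : t ^ (a2-1) = t ^ (a1-1) * t ^ d := by
      rw [← rpow_add ht.1, hddef]; ring_nf
    rw [this]; ring
  have hsub : Ioo (0:ℝ) x ⊆ Ioo 0 1 := Ioo_subset_Ioo le_rfl hx.2.le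
  have hI1x : IntegrableOn (fun t : ℝ => t^(a1-1)*(1-t)^(b-1)) (Ioo 0 x) := hI1.mono_set hsub
  have hI2x : IntegrableOn (fun t : ℝ => t^(a2-1)*(1-t)^(b-1)) (Ioo 0 x) := hI2.mono_set hsub
  rcases le_or_gt x s with hxs | hsx
  · have hpos : 0 < ∫ t in Ioo (0:ℝ) x,
        (B2 * (t^(a1-1)*(1-t)^(b-1)) - B1 * (t^(a2-1)*(1-t)^(b-1))) := by
      refine intpos hx.1 ((hI1x.const_mul B2).sub (hI2x.const_mul B1)) fun t ht => ?_
      have ht1 : t ∈ Ioo (0:ℝ) 1 := hsub ht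
      have htd : t ^ d < B2 / B1 := by
        rw [← hsd]; exact rpow_lt_rpow ht.1.le (lt_of_lt_of_le ht.2 hxs) hd
      have hlt : B1 * t ^ d < B2 := by
        rw [lt_div_iff₀ hB1] at htd; linarith
      nlinarith [fpos (a := a1) (b := b) ht1, key t ht1]
    rw [integral_sub (hI1x.const_mul B2) (hI2x.const_mul B1),
      integral_const_mul, integral_const_mul] at hpos
    linarith
  · have hIh : IntegrableOn (fun t : ℝ =>
        B1 * (t^(a2-1)*(1-t)^(b-1)) - B2 * (t^(a1-1)*(1-t)^(b-1))) (Ioo 0 1) :=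
      (hI2.const_mul B1).sub (hI1.const_mul B2)
    have htot : ∫ t in Ioo (0:ℝ) 1,
        (B1 * (t^(a2-1)*(1-t)^(b-1)) - B2 * (t^(a1-1)*(1-t)^(b-1))) = 0 := by
      rw [integral_sub (hI2.const_mul B1) (hI1.const_mul B2),
        integral_const_mul, integral_const_mul, ← hB1def, ← hB2def]
      ring
    have hsplit := intsplit (le_of_lt hx.1) (le_of_lt hx.2) hIh
    have hpos : 0 < ∫ t in Ioo x 1,
        (B1 * (t^(a2-1)*(1-t)^(b-1)) - B2 * (t^(a1-1)*(1-t)^(b-1))) := by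
      have hsub' : Ioo x 1 ⊆ Ioo (0:ℝ) 1 := Ioo_subset_Ioo hx.1.le le_rfl
      refine intpos hx.2 (((hI2.mono_set hsub').const_mul B1).sub
        ((hI1.mono_set hsub').const_mul B2)) fun t ht => ?_
      have ht1 : t ∈ Ioo (0:ℝ) 1 := hsub' ht
      have htd : B2 / B1 < t ^ d := by
        rw [← hsd]; exact rpow_lt_rpow hs0.le (hsx.trans ht.1) hd
      have hlt : B2 < B1 * t ^ d := by
        rw [div_lt_iff₀ hB1] at htd; linarith
      nlinarith [fpos (a := a1) (b := b) ht1, key t ht1]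
    have hneg : ∫ t in Ioo (0:ℝ) x,
        (B1 * (t^(a2-1)*(1-t)^(b-1)) - B2 * (t^(a1-1)*(1-t)^(b-1))) < 0 := by
      linarith
    rw [integral_sub (hI2x.const_mul B1) (hI1x.const_mul B2),
      integral_const_mul, integral_const_mul] at hneg
    linarith

theorem stmt_16 (p b : ℝ) (hp : p ∈ Set.Ioo (0 : ℝ) 1) (hb : 0 < b)
    (q : ℝ → ℝ)
    (hq : ∀ a : ℝ, 0 < a → q a ∈ Set.Ioo (0 : ℝ) 1 ∧
      (∫ t in Set.Ioo (0 : ℝ) (q a), t ^ (a - 1) * (1 - t) ^ (b - 1))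
        = p * ∫ t in Set.Ioo (0 : ℝ) 1, t ^ (a - 1) * (1 - t) ^ (b - 1)) :
    StrictMonoOn q (Set.Ioi 0) ∧
    Tendsto q (𝓝[>] 0) (𝓝 0) ∧
    Tendsto q atTop (𝓝 1) := by
  obtain ⟨hp0, hp1⟩ := hp
  refine ⟨?_, ?_, ?_⟩
  · -- strict monotonicity
    intro a1 ha1 a2 ha2 h12
    simp only [mem_Ioi] at ha1 ha2
    obtain ⟨hq1, he1⟩ := hq a1 ha1
    obtain ⟨hq2, he2⟩ := hq a2 ha2
    set B1 := ∫ t in Ioo (0:ℝ) 1, t^(a1-1)*(1-t)^(b-1)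
    set B2 := ∫ t in Ioo (0:ℝ) 1, t^(a2-1)*(1-t)^(b-1)
    have hB1 : 0 < B1 := intpos one_pos (beta_integrableOn ha1 hb) fun t ht => fpos ht
    have hB2 : 0 < B2 := intpos one_pos (beta_integrableOn ha2 hb) fun t ht => fpos ht
    have hG := Gneg hb ha1 h12 hq1
    rw [he1] at hG
    -- hG : B1 * F2(q a1) < B2 * (p * B1)
    have hFlt : (∫ t in Ioo (0:ℝ) (q a1), t^(a2-1)*(1-t)^(b-1))
        < ∫ t in Ioo (0:ℝ) (q a2), t^(a2-1)*(1-t)^(b-1) := by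
      rw [he2]
      rw [show B2 * (p * B1) = B1 * (p * B2) by ring] at hG
      exact lt_of_mul_lt_mul_left hG hB1.le
    by_contra hcon
    push_neg at hcon
    exact absurd (Fmono ha2 hb hq2.1.le hcon hq1.2.le) (not_le.2 hFlt)
  · -- limit at 0
    rw [tendsto_order]
    constructor
    · intro x hx
      filter_upwards [self_mem_nhdsWithin] with a ha
      exact hx.trans_le (hq a ha).1.1.le
    · intro x hx
      rcases le_or_gt 1 x with hx1 | hx1
      · filter_upwards [self_mem_nhdsWithin] with a ha
        exact (hq a ha).1.2.trans_le hx1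
      set C := ∫ t in Ioo x 1, (1-t)^(b-1) with hCdef
      have hJ : IntegrableOn (fun t : ℝ => (1-t)^(b-1)) (Ioo 0 1) := oneSub_integrableOn hb
      have hC0 : 0 ≤ C := setIntegral_nonneg measurableSet_Ioo fun t ht =>
        rpow_nonneg (by linarith [ht.2]) _
      set m := min 1 ((1-x)^(b-1)) with hmdef
      have hm : 0 < m := lt_min one_pos (rpow_pos_of_pos (by linarith) _)
      set δ := min 1 ((1-p)*m*x/(C+1)) with hδdef
      have hδ : 0 < δ := lt_min one_pos
        (div_pos (mul_pos (mul_pos (by linarith) hm) hx) (by linarith))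
      filter_upwards [Ioo_mem_nhdsGT_of_mem (show (0:ℝ) ∈ Ico 0 δ from ⟨le_rfl, hδ⟩)]
        with a ha
      obtain ⟨ha0, haδ⟩ := ha
      have ha1 : a < 1 := lt_of_lt_of_le haδ (min_le_left _ _)
      have haC : a * (C+1) < (1-p)*m*x := by
        have := lt_of_lt_of_le haδ (min_le_right _ _)
        rwa [lt_div_iff₀ (by linarith)] at this
      obtain ⟨hqa, hea⟩ := hq a ha0
      have hIa : IntegrableOn (fun t : ℝ => t^(a-1)*(1-t)^(b-1)) (Ioo 0 1) :=
        beta_integrableOn ha0 hb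
      set F := ∫ t in Ioo (0:ℝ) x, t^(a-1)*(1-t)^(b-1) with hFdef
      set T := ∫ t in Ioo x 1, t^(a-1)*(1-t)^(b-1) with hTdef
      have hsplitB : (∫ t in Ioo (0:ℝ) 1, t^(a-1)*(1-t)^(b-1)) = F + T :=
        intsplit hx.le hx1.le hIa
      have hF : 0 < F := intpos hx ((hIa.mono_set (Ioo_subset_Ioo le_rfl hx1.le)))
        fun t ht => fpos ⟨ht.1, ht.2.trans hx1⟩
      -- T ≤ x^(a-1) * C
      have hT : T ≤ x^(a-1) * C := by
        have hmono : T ≤ ∫ t in Ioo x 1, x^(a-1) * (1-t)^(b-1) := by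
          refine setIntegral_mono_on (hIa.mono_set (Ioo_subset_Ioo hx.le le_rfl))
            ((hJ.mono_set (Ioo_subset_Ioo hx.le le_rfl)).const_mul _)
            measurableSet_Ioo fun t ht => ?_
          have h1 : t^(a-1) ≤ x^(a-1) :=
            rpow_le_rpow_of_nonpos hx ht.1.le (by linarith)
          exact mul_le_mul_of_nonneg_right h1 (rpow_nonneg (by linarith [ht.2]) _)
        rwa [integral_const_mul] at hmono
      -- m * x^a ≤ a * F
      have hFlow : m * x^a ≤ a * F := by
        have hmono : (∫ t in Ioo (0:ℝ) x, m * t^(a-1)) ≤ F := by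
          refine setIntegral_mono_on ?_
            (hIa.mono_set (Ioo_subset_Ioo le_rfl hx1.le))
            measurableSet_Ioo fun t ht => ?_
          · have hri : IntegrableOn (fun t : ℝ => t ^ (a-1)) (Ioo 0 x) := by
              rw [← intervalIntegrable_iff_integrableOn_Ioo_of_le hx.le]
              exact intervalIntegral.intervalIntegrable_rpow' (by linarith)
            exact hri.const_mul m
          · have hbnd : m ≤ (1-t)^(b-1) := by
              rcases le_or_gt 1 b with hb1 | hb1
              · refine le_trans (min_le_right _ _) ?_
                exact rpow_le_rpow (by linarith [ht.2, hx1]) (by linarith [ht.2]) (by linarith)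
              · refine le_trans (min_le_left _ _) ?_
                calc (1:ℝ) = (1:ℝ)^(b-1) := (one_rpow _).symm
                  _ ≤ (1-t)^(b-1) :=
                    rpow_le_rpow_of_nonpos (by linarith [ht.2, hx1]) (by linarith [ht.1])
                      (by linarith)
            nlinarith [rpow_pos_of_pos ht.1 (a-1)]
        have hval : (∫ t in Ioo (0:ℝ) x, m * t^(a-1)) = m * (x^a / a) := by
          rw [integral_const_mul, ← integral_Ioc_eq_integral_Ioo,
            ← intervalIntegral.integral_of_le hx.le,
            integral_rpow (Or.inl (by linarith : (-1:ℝ) < a - 1))]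
          rw [zero_rpow (by linarith : a - 1 + 1 ≠ 0)]
          ring_nf
        rw [hval] at hmono
        have h2 : a * (m * (x ^ a / a)) = m * x ^ a := by field_simp
        have h3 := mul_le_mul_of_nonneg_left hmono ha0.le
        rw [h2] at h3
        exact h3
      have hTF : T < (1-p) * F := by
        have hx0 : (0:ℝ) < x := hx
        have hkey : T * (m * x) < (1-p) * F * (m * x) := by
          have hxa : x^(a-1) * x = x^a := by
            rw [← rpow_add_one hx0.ne']; ring_nf
          have step1 : T * (m * x) ≤ C * (m * x^a) := by
            have e1 : x^(a-1) * C * (m * x) = C * (m * x^a) := by rw [← hxa]; ring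
            have := mul_le_mul_of_nonneg_right hT (le_of_lt (mul_pos hm hx0))
            linarith
          have step2 : C * (m * x^a) ≤ C * (a * F) :=
            mul_le_mul_of_nonneg_left hFlow hC0
          have step3 : C * (a * F) < (1-p) * F * (m * x) := by
            have h1 : a * (C+1) * F < (1-p)*m*x * F :=
              mul_lt_mul_of_pos_right haC hF
            nlinarith [mul_pos ha0 hF]
          linarith
        exact lt_of_mul_lt_mul_right hkey (le_of_lt (mul_pos hm hx0))
      have hpB : p * (F + T) < F := by
        nlinarith [mul_pos (sub_pos.2 hp1) (sub_pos.2 hp1), mul_pos hp0 hF]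
      by_contra hcon
      push_neg at hcon
      have hle : F ≤ ∫ t in Ioo (0:ℝ) (q a), t^(a-1)*(1-t)^(b-1) :=
        Fmono ha0 hb hx.le hcon hqa.2.le
      rw [hea, hsplitB] at hle
      linarith
  · -- limit at infinity
    rw [tendsto_order]
    constructor
    · intro x hx
      rcases le_or_gt x 0 with hx0 | hx0
      · filter_upwards [eventually_ge_atTop (1:ℝ)] with a ha
        exact lt_of_le_of_lt hx0 (hq a (by linarith)).1.1
      set y := (1+x)/2 with hydef
      have hxy : x < y := by rw [hydef]; linarith
      have hy1 : y < 1 := by rw [hydef]; linarith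
      have hy0 : 0 < y := by rw [hydef]; linarith
      have hJ : IntegrableOn (fun t : ℝ => (1-t)^(b-1)) (Ioo 0 1) := oneSub_integrableOn hb
      set c := ∫ t in Ioo y 1, (1-t)^(b-1) with hcdef
      have hc : 0 < c := intpos hy1 (hJ.mono_set (Ioo_subset_Ioo hy0.le le_rfl))
        fun t ht => rpow_pos_of_pos (by linarith [ht.2]) _
      set C0 := ∫ t in Ioo (0:ℝ) x, (1-t)^(b-1) with hC0def
      have hC0 : 0 ≤ C0 := setIntegral_nonneg measurableSet_Ioo fun t ht =>
        rpow_nonneg (by linarith [ht.2, hx]) _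
      have htend : Tendsto (fun a : ℝ => (x/y)^(a-1)) atTop (𝓝 0) := by
        have h1 : Tendsto (fun a : ℝ => a - 1) atTop atTop :=
          tendsto_atTop_add_const_right _ _ tendsto_id
        exact (tendsto_rpow_atTop_of_base_lt_one _
          (by have : 0 < x/y := div_pos hx0 hy0; linarith)
          ((div_lt_one hy0).2 hxy)).comp h1
      filter_upwards [eventually_ge_atTop (1:ℝ),
        htend.eventually_lt_const (show (0:ℝ) < p * c / (C0+1) by positivity)]
        with a ha1 ha2
      have ha0 : 0 < a := by linarith
      obtain ⟨hqa, hea⟩ := hq a ha0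
      have hIa : IntegrableOn (fun t : ℝ => t^(a-1)*(1-t)^(b-1)) (Ioo 0 1) :=
        beta_integrableOn ha0 hb
      set B := ∫ t in Ioo (0:ℝ) 1, t^(a-1)*(1-t)^(b-1) with hBdef
      set Fx := ∫ t in Ioo (0:ℝ) x, t^(a-1)*(1-t)^(b-1) with hFxdef
      have hx1 : x < 1 := hxy.trans hy1
      -- Fx ≤ x^(a-1) * C0
      have hFx : Fx ≤ x^(a-1) * C0 := by
        have hmono : Fx ≤ ∫ t in Ioo (0:ℝ) x, x^(a-1) * (1-t)^(b-1) := by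
          refine setIntegral_mono_on (hIa.mono_set (Ioo_subset_Ioo le_rfl hx1.le))
            ((hJ.mono_set (Ioo_subset_Ioo le_rfl hx1.le)).const_mul _)
            measurableSet_Ioo fun t ht => ?_
          have h1 : t^(a-1) ≤ x^(a-1) := rpow_le_rpow ht.1.le ht.2.le (by linarith)
          exact mul_le_mul_of_nonneg_right h1 (rpow_nonneg (by linarith [ht.2, hx1]) _)
        rwa [integral_const_mul] at hmono
      -- y^(a-1) * c ≤ B
      have hBlow : y^(a-1) * c ≤ B := by
        have hmono : (∫ t in Ioo y 1, y^(a-1) * (1-t)^(b-1))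
            ≤ ∫ t in Ioo y 1, t^(a-1)*(1-t)^(b-1) := by
          refine setIntegral_mono_on
            ((hJ.mono_set (Ioo_subset_Ioo hy0.le le_rfl)).const_mul _)
            (hIa.mono_set (Ioo_subset_Ioo hy0.le le_rfl))
            measurableSet_Ioo fun t ht => ?_
          have h1 : y^(a-1) ≤ t^(a-1) := rpow_le_rpow hy0.le ht.1.le (by linarith)
          exact mul_le_mul_of_nonneg_right h1 (rpow_nonneg (by linarith [ht.2]) _)
        rw [integral_const_mul] at hmono
        have hnn : 0 ≤ ∫ t in Ioo (0:ℝ) y, t^(a-1)*(1-t)^(b-1) :=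
          setIntegral_nonneg measurableSet_Ioo fun t ht =>
            (fpos ⟨ht.1, ht.2.trans hy1⟩).le
        have := intsplit hy0.le hy1.le hIa
        rw [hBdef, this]
        linarith
      -- conclude Fx < p * B
      have hkey : Fx < p * B := by
        have hcross : x^(a-1) * (C0+1) < p * c * y^(a-1) := by
          rw [div_rpow hx0.le hy0.le,
            div_lt_div_iff₀ (rpow_pos_of_pos hy0 _) (by positivity)] at ha2
          linarith
        have hxp : 0 < x^(a-1) := rpow_pos_of_pos hx0 _
        calc Fx ≤ x^(a-1) * C0 := hFx
          _ < x^(a-1) * (C0+1) := by linarith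
          _ < p * c * y^(a-1) := hcross
          _ = p * (y^(a-1) * c) := by ring
          _ ≤ p * B := mul_le_mul_of_nonneg_left hBlow hp0.le
      by_contra hcon
      push_neg at hcon
      have hle : (∫ t in Ioo (0:ℝ) (q a), t^(a-1)*(1-t)^(b-1)) ≤ Fx :=
        Fmono ha0 hb hqa.1.le hcon hx1.le
      rw [hea] at hle
      linarith
    · intro x hx
      filter_upwards [eventually_ge_atTop (1:ℝ)] with a ha
      exact (hq a (by linarith)).1.2.trans hx
end

section
/- Fix p ∈ (0,1), b > 0, and let q(a) be the p-quantile of the Beta(a,b) distribution. If b = 1 then -a·log q(a) = -log p for all a > 0; if b > 1 then a ↦ -a·log q(a) is increasing; if b < 1 it is decreasing. Moreover lim_{a→0} (-a log q(a)) = -log p. -/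
open Real MeasureTheory Filter Topology Set


-- integrability of the beta integrand
lemma integrableOn_betaFn {a b : ℝ} (ha : 0 < a) (hb : 0 < b) :
    IntegrableOn (fun t : ℝ => t ^ (a-1) * (1-t) ^ (b-1)) (Ioo (0:ℝ) 1) := by
  have h1 : IntervalIntegrable (fun t : ℝ => t ^ (a-1) * (1-t) ^ (b-1)) volume 0 (1/2) := by
    apply IntervalIntegrable.mul_continuousOn
    · exact intervalIntegral.intervalIntegrable_rpow' (by linarith)
    · apply ContinuousOn.rpow_const
      · fun_prop
      · intro x hx
        rw [uIcc_of_le (by norm_num : (0:ℝ) ≤ 1/2)] at hx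
        left; nlinarith [hx.2]
  have h2 : IntervalIntegrable (fun t : ℝ => t ^ (a-1) * (1-t) ^ (b-1)) volume (1/2) 1 := by
    have h2' : IntervalIntegrable (fun t : ℝ => (1-t) ^ (b-1)) volume (1/2) 1 := by
      have := (intervalIntegral.intervalIntegrable_rpow' (r := b-1) (by linarith)
        (a := 0) (b := 1/2)).comp_sub_left 1
      norm_num at this
      exact this.symm
    apply h2'.continuousOn_mul
    apply ContinuousOn.rpow_const
    · fun_prop
    · intro x hx
      rw [uIcc_of_le (by norm_num : (1:ℝ)/2 ≤ 1)] at hx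
      left; nlinarith [hx.1]
  have := (h1.trans h2)
  rw [intervalIntegrable_iff_integrableOn_Ioo_of_le (by norm_num)] at this
  exact this

lemma integral_Ioo_split {g : ℝ → ℝ} {Q : ℝ} (hg : IntegrableOn g (Ioo (0:ℝ) 1))
    (hQ : Q ∈ Ioo (0:ℝ) 1) :
    ∫ t in Ioo (0:ℝ) 1, g t = (∫ t in Ioo (0:ℝ) Q, g t) + ∫ t in Ioo Q (1:ℝ), g t := by
  have hsub1 : Ioo (0:ℝ) Q ⊆ Ioo 0 1 := Ioo_subset_Ioo le_rfl hQ.2.le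
  have hsub2 : Ico Q (1:ℝ) ⊆ Ioo 0 1 := fun x hx => ⟨lt_of_lt_of_le hQ.1 hx.1, hx.2⟩
  rw [← Set.Ioo_union_Ico_eq_Ioo hQ.1 hQ.2.le,
    setIntegral_union (by apply Set.disjoint_left.2; rintro t ⟨_, h1⟩ ⟨h2, _⟩; linarith) measurableSet_Ico
      (hg.mono_set hsub1) (hg.mono_set hsub2),
    integral_Ico_eq_integral_Ioo]

lemma integral_Ioo_pos {g : ℝ → ℝ} {x y : ℝ} (hxy : x < y) (hg : IntegrableOn g (Ioo x y))
    (hpos : ∀ t ∈ Ioo x y, 0 < g t) : 0 < ∫ t in Ioo x y, g t := by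
  rw [setIntegral_pos_iff_support_of_nonneg_ae
    ((ae_restrict_iff' measurableSet_Ioo).2 (.of_forall fun t ht => (hpos t ht).le)) hg]
  refine lt_of_lt_of_le ?_ (measure_mono (fun t ht => ⟨(hpos t ht).ne', ht⟩ :
    Ioo x y ⊆ Function.support g ∩ Ioo x y))
  simp [hxy]

lemma integral_Ioo_mono_right {g : ℝ → ℝ} {x y : ℝ} (hx : 0 ≤ x) (hxy : x ≤ y) (hy : y ≤ 1)
    (hg : IntegrableOn g (Ioo (0:ℝ) 1)) (hpos : ∀ t ∈ Ioo (0:ℝ) 1, 0 ≤ g t) :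
    (∫ t in Ioo (0:ℝ) x, g t) ≤ ∫ t in Ioo (0:ℝ) y, g t := by
  have hsub : Ioo (0:ℝ) y ⊆ Ioo 0 1 := Ioo_subset_Ioo le_rfl hy
  apply setIntegral_mono_set (hg.mono_set hsub)
  · exact (ae_restrict_iff' measurableSet_Ioo).2 (.of_forall fun t ht => hpos t (hsub ht))
  · exact HasSubset.Subset.eventuallyLE (Ioo_subset_Ioo le_rfl hxy)



lemma mlr_main {g₁ g₂ : ℝ → ℝ} {p Q lam : ℝ} (hp : p ∈ Ioo (0:ℝ) 1) (hQ : Q ∈ Ioo (0:ℝ) 1)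
    (h1 : IntegrableOn g₁ (Ioo (0:ℝ) 1)) (h2 : IntegrableOn g₂ (Ioo (0:ℝ) 1))
    (hlt : ∀ t ∈ Ioo (0:ℝ) Q, lam * g₁ t < g₂ t)
    (hge : ∀ t ∈ Ioo Q (1:ℝ), g₂ t ≤ lam * g₁ t)
    (heq : (∫ t in Ioo (0:ℝ) Q, g₁ t) = p * ∫ t in Ioo (0:ℝ) 1, g₁ t) :
    p * (∫ t in Ioo (0:ℝ) 1, g₂ t) < ∫ t in Ioo (0:ℝ) Q, g₂ t := by
  have hsub1 : Ioo (0:ℝ) Q ⊆ Ioo 0 1 := Ioo_subset_Ioo le_rfl hQ.2.le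
  have hsub2 : Ioo Q (1:ℝ) ⊆ Ioo 0 1 := Ioo_subset_Ioo hQ.1.le le_rfl
  have hs1 := integral_Ioo_split h1 hQ
  have hs2 := integral_Ioo_split h2 hQ
  have hstrict : lam * (∫ t in Ioo (0:ℝ) Q, g₁ t) < ∫ t in Ioo (0:ℝ) Q, g₂ t := by
    have hpos : 0 < ∫ t in Ioo (0:ℝ) Q, (g₂ t - lam * g₁ t) := by
      apply integral_Ioo_pos hQ.1
      · exact (h2.mono_set hsub1).sub ((h1.mono_set hsub1).const_mul lam)
      · intro t ht; simpa [sub_pos] using hlt t ht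
    rw [integral_sub (h2.mono_set hsub1) ((h1.mono_set hsub1).const_mul lam),
      integral_const_mul] at hpos
    linarith
  have hBle : (∫ t in Ioo Q (1:ℝ), g₂ t) ≤ lam * ∫ t in Ioo Q (1:ℝ), g₁ t := by
    have := setIntegral_mono_on (h2.mono_set hsub2)
      ((h1.mono_set hsub2).const_mul lam) measurableSet_Ioo hge
    rwa [integral_const_mul] at this
  have hp1 : (0:ℝ) < p := hp.1
  have hp2 : p < 1 := hp.2
  rw [hs1] at heq
  rw [hs2]
  have e1 : p * (∫ t in Ioo Q (1:ℝ), g₂ t) ≤ p * (lam * ∫ t in Ioo Q (1:ℝ), g₁ t) :=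
    mul_le_mul_of_nonneg_left hBle hp1.le
  have e2 : p * (lam * ∫ t in Ioo Q (1:ℝ), g₁ t)
      = (1-p) * (lam * ∫ t in Ioo (0:ℝ) Q, g₁ t) := by linear_combination (-lam) * heq
  have e3 : (1-p) * (lam * ∫ t in Ioo (0:ℝ) Q, g₁ t) < (1-p) * ∫ t in Ioo (0:ℝ) Q, g₂ t :=
    mul_lt_mul_of_pos_left hstrict (by linarith)
  linarith

lemma mlr_main' {g₁ g₂ : ℝ → ℝ} {p Q lam : ℝ} (hp : p ∈ Ioo (0:ℝ) 1) (hQ : Q ∈ Ioo (0:ℝ) 1)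
    (h1 : IntegrableOn g₁ (Ioo (0:ℝ) 1)) (h2 : IntegrableOn g₂ (Ioo (0:ℝ) 1))
    (hlt : ∀ t ∈ Ioo (0:ℝ) Q, g₂ t < lam * g₁ t)
    (hge : ∀ t ∈ Ioo Q (1:ℝ), lam * g₁ t ≤ g₂ t)
    (heq : (∫ t in Ioo (0:ℝ) Q, g₁ t) = p * ∫ t in Ioo (0:ℝ) 1, g₁ t) :
    (∫ t in Ioo (0:ℝ) Q, g₂ t) < p * ∫ t in Ioo (0:ℝ) 1, g₂ t := by
  have := mlr_main (g₂ := fun t => -g₂ t) (lam := -lam) hp hQ h1 h2.neg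
    (fun t ht => by have := hlt t ht; simp; linarith)
    (fun t ht => by have := hge t ht; simp; linarith) heq
  rw [integral_neg, integral_neg] at this
  linarith

lemma image_rpow_Ioo {c m : ℝ} (hc : 0 < c) (hm : 0 < m) :
    (fun s : ℝ => s ^ c) '' Ioo 0 m = Ioo 0 (m ^ c) := by
  ext t
  constructor
  · rintro ⟨s, ⟨hs0, hsm⟩, rfl⟩
    exact ⟨Real.rpow_pos_of_pos hs0 c, Real.rpow_lt_rpow hs0.le hsm hc⟩
  · rintro ⟨ht0, htm⟩
    refine ⟨t ^ c⁻¹, ⟨Real.rpow_pos_of_pos ht0 _, ?_⟩, Real.rpow_inv_rpow ht0.le hc.ne'⟩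
    have := Real.rpow_lt_rpow ht0.le htm (by positivity : 0 < c⁻¹)
    rwa [Real.rpow_rpow_inv hm.le hc.ne'] at this

lemma hasDeriv_rpow_within {c m : ℝ} (hc : 0 < c) :
    ∀ x ∈ Ioo (0:ℝ) m, HasDerivWithinAt (fun s : ℝ => s ^ c) (c * x ^ (c-1)) (Ioo (0:ℝ) m) x :=
  fun x hx => ((Real.hasDerivAt_rpow_const (Or.inl hx.1.ne')).hasDerivWithinAt).congr_deriv
    (by ring)

lemma injOn_rpow_Ioo {c m : ℝ} (hc : 0 < c) :
    InjOn (fun s : ℝ => s ^ c) (Ioo 0 m) := by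
  intro x hx y hy hxy
  have := Real.rpow_left_injOn (x := c) hc.ne'
  exact this (le_of_lt hx.1 : (0:ℝ) ≤ x) (le_of_lt hy.1) hxy

-- change of variables: t = s ^ c
lemma beta_subst {b A c m : ℝ} (hc : 0 < c) (hm : 0 < m) :
    (∫ t in Ioo (0:ℝ) (m ^ c), t ^ (A-1) * (1-t) ^ (b-1))
      = ∫ s in Ioo (0:ℝ) m, c * s ^ (c*A-1) * (1-s^c) ^ (b-1) := by
  have himg := image_rpow_Ioo hc hm
  rw [← himg, integral_image_eq_integral_abs_deriv_smul measurableSet_Ioo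
    (hasDeriv_rpow_within hc) (injOn_rpow_Ioo hc)]
  apply setIntegral_congr_fun measurableSet_Ioo
  intro s hs
  have hs0 : (0:ℝ) < s := hs.1
  simp only [smul_eq_mul]
  rw [abs_of_pos (by positivity : (0:ℝ) < c * s ^ (c-1)),
    ← Real.rpow_mul hs0.le c (A-1)]
  rw [show c * s ^ (c-1) * (s ^ (c*(A-1)) * (1 - s^c) ^ (b-1))
      = c * (s ^ (c-1) * s ^ (c*(A-1))) * (1 - s^c) ^ (b-1) by ring,
    ← Real.rpow_add hs0]
  ring_nf

lemma beta_subst_integrable {b A c m : ℝ} (hc : 0 < c) (hm : 0 < m)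
    (h : IntegrableOn (fun t : ℝ => t ^ (A-1) * (1-t) ^ (b-1)) (Ioo (0:ℝ) (m ^ c))) :
    IntegrableOn (fun s : ℝ => c * s ^ (c*A-1) * (1-s^c) ^ (b-1)) (Ioo (0:ℝ) m) := by
  have himg := image_rpow_Ioo hc hm
  rw [← himg] at h
  rw [integrableOn_image_iff_integrableOn_abs_deriv_smul measurableSet_Ioo
    (hasDeriv_rpow_within hc) (injOn_rpow_Ioo hc)] at h
  apply h.congr_fun _ measurableSet_Ioo
  intro s hs
  have hs0 : (0:ℝ) < s := hs.1
  simp only [smul_eq_mul]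
  rw [abs_of_pos (by positivity : (0:ℝ) < c * s ^ (c-1)),
    ← Real.rpow_mul hs0.le c (A-1)]
  rw [show c * s ^ (c-1) * (s ^ (c*(A-1)) * (1 - s^c) ^ (b-1))
      = c * (s ^ (c-1) * s ^ (c*(A-1))) * (1 - s^c) ^ (b-1) by ring,
    ← Real.rpow_add hs0]
  ring_nf

lemma hasDerivAt_N {c : ℝ} (s : ℝ) (hs : 0 < s) :
    HasDerivAt (fun s : ℝ => 1 - s^c - c * (s^(c-1) * (1-s)))
      (-(c*(c-1)) * (s^(c-2) * (1-s))) s := by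
  have h1 : HasDerivAt (fun s : ℝ => s ^ c) (c * s^(c-1)) s :=
    Real.hasDerivAt_rpow_const (Or.inl hs.ne')
  have h2 : HasDerivAt (fun s : ℝ => s ^ (c-1)) ((c-1) * s^(c-2)) s := by
    have := Real.hasDerivAt_rpow_const (x := s) (p := c-1) (Or.inl hs.ne')
    convert this using 2
    ring_nf
  have h3 : HasDerivAt (fun s : ℝ => s^(c-1) * (1-s))
      ((c-1) * s^(c-2) * (1-s) + s^(c-1) * (-1)) s :=
    h2.mul ((hasDerivAt_id s).const_sub 1)
  have h4 := ((h1.const_sub 1).sub (h3.const_mul c))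
  convert h4 using 1
  case e'_4 => rfl
  case e'_5 => rfl
  case e'_8 => rfl
  have hpow : s^(c-1) = s^(c-2) * s := by
    rw [← Real.rpow_add_one hs.ne' (c-2)]; ring_nf
  rw [hpow]; ring

lemma N_neg {c : ℝ} (hc : 0 < c) (hc1 : c < 1) {s : ℝ} (hs : s ∈ Ioo (0:ℝ) 1) :
    1 - s^c - c * (s^(c-1) * (1-s)) < 0 := by
  set N : ℝ → ℝ := fun s => 1 - s^c - c * (s^(c-1) * (1-s)) with hN
  have hmono : StrictMonoOn N (Ioc (0:ℝ) 1) := by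
    apply strictMonoOn_of_deriv_pos (convex_Ioc 0 1)
    · apply continuousOn_of_forall_continuousAt
      intro x hx
      exact (hasDerivAt_N x hx.1).continuousAt
    · intro x hx
      rw [interior_Ioc] at hx
      rw [(hasDerivAt_N x hx.1).deriv]
      have h1 : (0:ℝ) < x^(c-2) := Real.rpow_pos_of_pos hx.1 _
      have h2 : (0:ℝ) < 1 - x := by linarith [hx.2]
      have h3 : (0:ℝ) < c * (1-c) := by nlinarith
      calc (0:ℝ) < (c*(1-c)) * (x^(c-2)*(1-x)) := by positivity
        _ = -(c*(c-1)) * (x^(c-2)*(1-x)) := by ring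
  have hN1 : N 1 = 0 := by simp [hN]
  have := hmono (Set.mem_Ioc.2 ⟨hs.1, hs.2.le⟩) (Set.mem_Ioc.2 ⟨one_pos, le_rfl⟩) hs.2
  rw [hN1] at this
  exact this

lemma ratio_strictAnti {c : ℝ} (hc : 0 < c) (hc1 : c < 1) :
    StrictAntiOn (fun s : ℝ => (1 - s^c)/(1-s)) (Ioo (0:ℝ) 1) := by
  apply strictAntiOn_of_deriv_neg (convex_Ioo 0 1)
  · apply continuousOn_of_forall_continuousAt
    intro x hx
    have h1 : HasDerivAt (fun s : ℝ => s ^ c) (c * x^(c-1)) x :=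
      Real.hasDerivAt_rpow_const (Or.inl hx.1.ne')
    exact (((h1.const_sub 1).div ((hasDerivAt_id x).const_sub 1)
      (by simp only [mem_Ioo] at hx; intro h; simp only [id_eq] at h
          linarith [hx.2])).continuousAt)
  · intro x hx
    rw [interior_Ioo] at hx
    have hx1 : 1 - x ≠ 0 := by simp only [mem_Ioo] at hx; intro h; nlinarith [hx.2]
    have h1 : HasDerivAt (fun s : ℝ => s ^ c) (c * x^(c-1)) x :=
      Real.hasDerivAt_rpow_const (Or.inl hx.1.ne')
    have hD : HasDerivAt (fun s : ℝ => (1 - s^c)/(1-s))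
        (((-(c * x ^ (c-1))) * (1 - x) - (1 - x^c) * (-1)) / (1 - x)^2) x :=
      (h1.const_sub 1).div ((hasDerivAt_id x).const_sub 1) hx1
    rw [hD.deriv]
    apply div_neg_of_neg_of_pos
    · nlinarith [N_neg hc hc1 hx]
    · have : 0 < 1 - x := by simp only [mem_Ioo] at hx; linarith [hx.2]
      positivity

lemma phi_lt {p b : ℝ} (hp : p ∈ Set.Ioo (0 : ℝ) 1) (hb : 0 < b)
    {q : ℝ → ℝ}
    (hq : ∀ a : ℝ, 0 < a → q a ∈ Set.Ioo (0 : ℝ) 1 ∧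
      (∫ t in Set.Ioo (0 : ℝ) (q a), t ^ (a - 1) * (1 - t) ^ (b - 1))
        = p * ∫ t in Set.Ioo (0 : ℝ) 1, t ^ (a - 1) * (1 - t) ^ (b - 1))
    {a a' : ℝ} (ha : 0 < a) (haa : a < a') :
    (1 < b → -a * Real.log (q a) < -a' * Real.log (q a')) ∧
    (b < 1 → -a' * Real.log (q a') < -a * Real.log (q a)) := by
  have ha' : 0 < a' := lt_trans ha haa
  set c : ℝ := a / a' with hcdef
  have hc : 0 < c := by positivity
  have hc1 : c < 1 := (div_lt_one ha').2 haa
  have hca : c * a' = a := by rw [hcdef]; field_simp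
  obtain ⟨hQ, heqa⟩ := hq a ha
  obtain ⟨hQ', heqa'⟩ := hq a' ha'
  set Q : ℝ := q a
  set Q' : ℝ := (q a') ^ c⁻¹ with hQ'def
  have hQ'mem : Q' ∈ Ioo (0:ℝ) 1 :=
    ⟨Real.rpow_pos_of_pos hQ'.1 _, Real.rpow_lt_one hQ'.1.le hQ'.2 (by positivity)⟩
  have hQ'pow : Q' ^ c = q a' := Real.rpow_inv_rpow hQ'.1.le hc.ne'
  -- the substituted density
  set g₁ : ℝ → ℝ := fun t => t ^ (a-1) * (1-t) ^ (b-1) with hg₁def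
  set g₂ : ℝ → ℝ := fun s => c * s ^ (a-1) * (1-s^c) ^ (b-1) with hg₂def
  have h1 : IntegrableOn g₁ (Ioo (0:ℝ) 1) := integrableOn_betaFn ha hb
  have h2 : IntegrableOn g₂ (Ioo (0:ℝ) 1) := by
    have := beta_subst_integrable (b := b) (A := a') (c := c) (m := 1) hc one_pos
      (by rw [Real.one_rpow]; exact integrableOn_betaFn ha' hb)
    rw [hca] at this
    exact this
  -- substituted quantile condition
  have heq2 : (∫ s in Ioo (0:ℝ) Q', g₂ s) = p * ∫ s in Ioo (0:ℝ) 1, g₂ s := by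
    have e1 := beta_subst (b := b) (A := a') (c := c) (m := Q') hc hQ'mem.1
    have e2 := beta_subst (b := b) (A := a') (c := c) (m := 1) hc one_pos
    rw [hQ'pow] at e1
    rw [Real.one_rpow] at e2
    rw [hca] at e1 e2
    rw [← e1, ← e2]
    exact heqa'
  -- ratio function
  set F : ℝ → ℝ := fun s => (1 - s^c)/(1-s) with hFdef
  have hFpos : ∀ t ∈ Ioo (0:ℝ) 1, 0 < F t := by
    intro t ht
    have h1t : t ^ c < 1 := Real.rpow_lt_one ht.1.le ht.2 hc
    have : 0 < 1 - t := by linarith [ht.2]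
    apply div_pos (by linarith) this
  have hg₁pos : ∀ t ∈ Ioo (0:ℝ) 1, 0 < g₁ t := by
    intro t ht
    have h1t : 0 < 1 - t := by linarith [ht.2]
    have ht0 : 0 < t := ht.1
    show 0 < t ^ (a-1) * (1-t) ^ (b-1)
    positivity
  have hg₂eq : ∀ t ∈ Ioo (0:ℝ) 1, g₂ t = c * (F t) ^ (b-1) * g₁ t := by
    intro t ht
    have h1t : (0:ℝ) < 1 - t := by linarith [ht.2]
    have h1tc : (0:ℝ) ≤ 1 - t^c := by
      have := Real.rpow_lt_one ht.1.le ht.2 hc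
      linarith
    simp only [hg₂def, hg₁def, hFdef]
    rw [Real.div_rpow h1tc h1t.le]
    field_simp
  have hanti := ratio_strictAnti hc hc1
  constructor
  · -- b > 1 : use mlr_main
    intro hb1
    have hkey : p * (∫ t in Ioo (0:ℝ) 1, g₂ t) < ∫ t in Ioo (0:ℝ) Q, g₂ t := by
      apply mlr_main (lam := c * (F Q) ^ (b-1)) hp hQ h1 h2 _ _ heqa
      · intro t ht
        have htm : t ∈ Ioo (0:ℝ) 1 := Ioo_subset_Ioo le_rfl hQ.2.le ht
        have hFt : F Q < F t := hanti htm hQ ht.2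
        have hr : (F Q) ^ (b-1) < (F t) ^ (b-1) :=
          Real.rpow_lt_rpow (hFpos Q hQ).le hFt (by linarith)
        rw [hg₂eq t htm]
        have := hg₁pos t htm
        have : c * (F Q) ^ (b-1) * g₁ t < c * (F t) ^ (b-1) * g₁ t := by
          apply mul_lt_mul_of_pos_right _ this
          exact mul_lt_mul_of_pos_left hr hc
        linarith
      · intro t ht
        have htm : t ∈ Ioo (0:ℝ) 1 := Ioo_subset_Ioo hQ.1.le le_rfl ht
        have hFt : F t < F Q := hanti hQ htm ht.1
        have hr : (F t) ^ (b-1) ≤ (F Q) ^ (b-1) :=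
          (Real.rpow_le_rpow (hFpos t htm).le hFt.le (by linarith))
        rw [hg₂eq t htm]
        have hgt := hg₁pos t htm
        exact mul_le_mul_of_nonneg_right (mul_le_mul_of_nonneg_left hr hc.le) hgt.le
    -- conclude Q' < Q
    have hQ'Q : Q' < Q := by
      by_contra hcon
      push_neg at hcon
      have : (∫ t in Ioo (0:ℝ) Q, g₂ t) ≤ ∫ t in Ioo (0:ℝ) Q', g₂ t :=
        integral_Ioo_mono_right hQ.1.le hcon hQ'mem.2.le h2
          (fun t ht => by
            have h1t : (0:ℝ) < 1 - t^c := by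
              have := Real.rpow_lt_one ht.1.le ht.2 hc; linarith
            exact (mul_pos (mul_pos hc (Real.rpow_pos_of_pos ht.1 _))
              (Real.rpow_pos_of_pos h1t _)).le)
      rw [heq2] at this
      linarith
    -- translate to logs
    have hlogQ' : Real.log Q' = c⁻¹ * Real.log (q a') := Real.log_rpow hQ'.1 _
    have hlog : Real.log Q' < Real.log Q := Real.log_lt_log hQ'mem.1 hQ'Q
    have hac : a * c⁻¹ = a' := by
      rw [hcdef]; field_simp
    calc -a * Real.log Q < -a * Real.log Q' := by nlinarith [ha]
      _ = -a' * Real.log (q a') := by rw [hlogQ', ← hac]; ring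
  · -- b < 1 : use mlr_main'
    intro hb1
    have hkey : (∫ t in Ioo (0:ℝ) Q, g₂ t) < p * ∫ t in Ioo (0:ℝ) 1, g₂ t := by
      apply mlr_main' (lam := c * (F Q) ^ (b-1)) hp hQ h1 h2 _ _ heqa
      · intro t ht
        have htm : t ∈ Ioo (0:ℝ) 1 := Ioo_subset_Ioo le_rfl hQ.2.le ht
        have hFt : F Q < F t := hanti htm hQ ht.2
        have hr : (F t) ^ (b-1) < (F Q) ^ (b-1) :=
          Real.rpow_lt_rpow_of_neg (hFpos Q hQ) hFt (by linarith)
        rw [hg₂eq t htm]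
        have hgt := hg₁pos t htm
        calc c * F t ^ (b-1) * g₁ t < c * F Q ^ (b-1) * g₁ t :=
              mul_lt_mul_of_pos_right (mul_lt_mul_of_pos_left hr hc) hgt
          _ = c * F Q ^ (b-1) * g₁ t := rfl
      · intro t ht
        have htm : t ∈ Ioo (0:ℝ) 1 := Ioo_subset_Ioo hQ.1.le le_rfl ht
        have hFt : F t < F Q := hanti hQ htm ht.1
        have hr : (F Q) ^ (b-1) ≤ (F t) ^ (b-1) :=
          (Real.rpow_lt_rpow_of_neg (hFpos t htm) hFt (by linarith)).le
        rw [hg₂eq t htm]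
        have hgt := hg₁pos t htm
        exact mul_le_mul_of_nonneg_right (mul_le_mul_of_nonneg_left hr hc.le) hgt.le
    have hQ'Q : Q < Q' := by
      by_contra hcon
      push_neg at hcon
      have : (∫ t in Ioo (0:ℝ) Q', g₂ t) ≤ ∫ t in Ioo (0:ℝ) Q, g₂ t :=
        integral_Ioo_mono_right hQ'mem.1.le hcon hQ.2.le h2
          (fun t ht => by
            have h1t : (0:ℝ) < 1 - t^c := by
              have := Real.rpow_lt_one ht.1.le ht.2 hc; linarith
            exact (mul_pos (mul_pos hc (Real.rpow_pos_of_pos ht.1 _))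
              (Real.rpow_pos_of_pos h1t _)).le)
      rw [heq2] at this
      linarith
    have hlogQ' : Real.log Q' = c⁻¹ * Real.log (q a') := Real.log_rpow hQ'.1 _
    have hlog : Real.log Q < Real.log Q' := Real.log_lt_log hQ.1 hQ'Q
    have hac : a * c⁻¹ = a' := by
      rw [hcdef]; field_simp
    calc -a' * Real.log (q a') = -a * Real.log Q' := by rw [hlogQ', ← hac]; ring
      _ < -a * Real.log Q := by nlinarith [ha]
section
variable {b : ℝ}

-- the substituted weight
noncomputable def W (b a : ℝ) : ℝ → ℝ := fun s => (1 - s ^ a⁻¹) ^ (b-1)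

lemma W_pos {a s : ℝ} (ha : 0 < a) (hs : s ∈ Ioo (0:ℝ) 1) : 0 < W b a s := by
  have : s ^ a⁻¹ < 1 := Real.rpow_lt_one hs.1.le hs.2 (by positivity)
  exact Real.rpow_pos_of_pos (by linarith) _

lemma W_integrable (hb : 0 < b) {a : ℝ} (ha : 0 < a) :
    IntegrableOn (W b a) (Ioo (0:ℝ) 1) := by
  have h := (beta_subst_integrable (b := b) (A := a) (c := a⁻¹) (m := 1)
    (by positivity) one_pos
    (by rw [Real.one_rpow]; exact integrableOn_betaFn ha hb)).const_mul a
  have hinv : a⁻¹ * a - 1 = 0 := by field_simp; norm_num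
  refine IntegrableOn.congr_fun h (fun s hs => ?_) measurableSet_Ioo
  simp only [hinv, Real.rpow_zero, W]
  field_simp

lemma H_quantile (hb : 0 < b) {p : ℝ} {q : ℝ → ℝ} {a : ℝ} (ha : 0 < a)
    (hqa : q a ∈ Set.Ioo (0 : ℝ) 1)
    (heqa : (∫ t in Set.Ioo (0 : ℝ) (q a), t ^ (a - 1) * (1 - t) ^ (b - 1))
        = p * ∫ t in Set.Ioo (0 : ℝ) 1, t ^ (a - 1) * (1 - t) ^ (b - 1)) :
    (∫ s in Ioo (0:ℝ) ((q a) ^ a), W b a s) = p * ∫ s in Ioo (0:ℝ) 1, W b a s := by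
  have h0 : (0:ℝ) < (q a) ^ a := Real.rpow_pos_of_pos hqa.1 _
  have e1 := beta_subst (b := b) (A := a) (c := a⁻¹) (m := (q a) ^ a)
    (by positivity) h0
  have e2 := beta_subst (b := b) (A := a) (c := a⁻¹) (m := 1) (by positivity) one_pos
  rw [Real.rpow_rpow_inv hqa.1.le ha.ne'] at e1
  rw [Real.one_rpow] at e2
  rw [e1, e2] at heqa
  have hsimp : ∀ m : ℝ, (∫ s in Ioo (0:ℝ) m, a⁻¹ * s ^ (a⁻¹*a-1) * (1-s^a⁻¹) ^ (b-1))
      = a⁻¹ * ∫ s in Ioo (0:ℝ) m, W b a s := by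
    intro m
    rw [← integral_const_mul]
    apply setIntegral_congr_fun measurableSet_Ioo
    intro s hs
    have hinv : a⁻¹ * a - 1 = 0 := by field_simp; norm_num
    simp only [hinv, Real.rpow_zero, W]
    ring
  rw [hsimp, hsimp, mul_left_comm] at heqa
  exact mul_left_cancel₀ (inv_ne_zero ha.ne') heqa
end

section
variable {b : ℝ}

lemma W_le_bound (hb : 0 < b) {a s : ℝ} (ha : a ∈ Ioc (0:ℝ) 1) (hs : s ∈ Ioo (0:ℝ) 1) :
    W b a s ≤ 1 + (1-s) ^ (b-1) := by
  have hs0 := hs.1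
  have hs1 := hs.2
  have hinv : (1:ℝ) ≤ a⁻¹ := (one_le_inv_iff₀.2 ⟨ha.1, ha.2⟩ : _)
  have hle : s ^ a⁻¹ ≤ s := by
    have := Real.rpow_le_rpow_of_exponent_ge hs0 hs1.le hinv
    rwa [Real.rpow_one] at this
  have h1 : 0 < 1 - s := by linarith
  have h2 : 1 - s ≤ 1 - s ^ a⁻¹ := by linarith
  have hlt1 : s ^ a⁻¹ < 1 := Real.rpow_lt_one hs0.le hs1 (by positivity)
  have h3 : (0:ℝ) ≤ s ^ a⁻¹ := Real.rpow_nonneg hs0.le _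
  rcases le_or_gt 1 b with hb1 | hb1
  · have hW : W b a s ≤ 1 := Real.rpow_le_one (by linarith) (by linarith) (by linarith)
    have hnn : (0:ℝ) ≤ (1-s) ^ (b-1) := Real.rpow_nonneg h1.le _
    linarith
  · have hW : W b a s ≤ (1-s) ^ (b-1) :=
      (Real.rpow_le_rpow_iff_of_neg (by linarith) h1 (by linarith)).2 h2
    linarith

lemma bound_integrable (hb : 0 < b) :
    IntegrableOn (fun s : ℝ => 1 + (1-s) ^ (b-1)) (Ioo (0:ℝ) 1) := by
  apply Integrable.add
  · exact integrableOn_const (by simp [Real.volume_Ioo])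
  · have := integrableOn_betaFn one_pos hb
    refine IntegrableOn.congr_fun this (fun s hs => ?_) measurableSet_Ioo
    norm_num

lemma H_tendsto (hb : 0 < b) {x : ℝ} (hx0 : 0 < x) (hx1 : x ≤ 1) :
    Tendsto (fun a => ∫ s in Ioo (0:ℝ) x, W b a s) (𝓝[>] (0:ℝ)) (𝓝 x) := by
  have hIoo : Ioo (0:ℝ) x ⊆ Ioo 0 1 := Ioo_subset_Ioo le_rfl hx1
  have hmain : Tendsto (fun a => ∫ s in Ioo (0:ℝ) x, W b a s) (𝓝[>] (0:ℝ))
      (𝓝 (∫ s in Ioo (0:ℝ) x, (1:ℝ))) := by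
    apply tendsto_integral_filter_of_dominated_convergence
      (fun s => 1 + (1-s) ^ (b-1))
    · filter_upwards [self_mem_nhdsWithin] with a (ha : 0 < a)
      apply Measurable.aestronglyMeasurable
      unfold W
      fun_prop
    · filter_upwards [Ioc_mem_nhdsGT one_pos] with a ha
      rw [ae_restrict_iff' measurableSet_Ioo]
      filter_upwards with s hs
      rw [Real.norm_eq_abs, abs_of_nonneg (W_pos ha.1 (hIoo hs)).le]
      exact W_le_bound hb ha (hIoo hs)
    · exact (bound_integrable hb).mono_set hIoo
    · rw [ae_restrict_iff' measurableSet_Ioo]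
      filter_upwards with s hs
      have hs' := hIoo hs
      have h1 : Tendsto (fun a : ℝ => s ^ a⁻¹) (𝓝[>] (0:ℝ)) (𝓝 0) := by
        have := (tendsto_rpow_atTop_of_base_lt_one s (by linarith [hs'.1]) hs'.2).comp
          tendsto_inv_nhdsGT_zero
        exact this
      have h2 : Tendsto (fun a : ℝ => 1 - s ^ a⁻¹) (𝓝[>] (0:ℝ)) (𝓝 1) := by
        have := h1.const_sub 1
        simpa using this
      have h3 : ContinuousAt (fun y : ℝ => y ^ (b-1)) 1 :=
        Real.continuousAt_rpow_const 1 (b-1) (Or.inl one_ne_zero)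
      have := h3.tendsto.comp h2
      rw [Real.one_rpow] at this
      exact this
  have : (∫ s in Ioo (0:ℝ) x, (1:ℝ)) = x := by
    simp [Real.volume_Ioo, ENNReal.toReal_ofReal hx0.le, hx0.le]
  rwa [this] at hmain
end

lemma phi_tendsto {p b : ℝ} (hp : p ∈ Set.Ioo (0 : ℝ) 1) (hb : 0 < b)
    {q : ℝ → ℝ}
    (hq : ∀ a : ℝ, 0 < a → q a ∈ Set.Ioo (0 : ℝ) 1 ∧
      (∫ t in Set.Ioo (0 : ℝ) (q a), t ^ (a - 1) * (1 - t) ^ (b - 1))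
        = p * ∫ t in Set.Ioo (0 : ℝ) 1, t ^ (a - 1) * (1 - t) ^ (b - 1)) :
    Tendsto (fun a => -a * Real.log (q a)) (𝓝[>] (0:ℝ)) (𝓝 (-Real.log p)) := by
  have hQmem : ∀ a : ℝ, 0 < a → (q a) ^ a ∈ Ioo (0:ℝ) 1 := fun a ha =>
    ⟨Real.rpow_pos_of_pos (hq a ha).1.1 _,
     Real.rpow_lt_one (hq a ha).1.1.le (hq a ha).1.2 ha⟩
  have hHq : ∀ a : ℝ, 0 < a →
      (∫ s in Ioo (0:ℝ) ((q a) ^ a), W b a s) = p * ∫ s in Ioo (0:ℝ) 1, W b a s :=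
    fun a ha => H_quantile hb ha (hq a ha).1 (hq a ha).2
  have hH1 : Tendsto (fun a => p * ∫ s in Ioo (0:ℝ) 1, W b a s) (𝓝[>] (0:ℝ)) (𝓝 p) := by
    have := (H_tendsto hb one_pos le_rfl).const_mul p
    rwa [mul_one] at this
  have htend : Tendsto (fun a => (q a) ^ a) (𝓝[>] (0:ℝ)) (𝓝 p) := by
    rw [tendsto_order]
    constructor
    · intro x hx
      rcases le_or_gt x 0 with hx0 | hx0
      · filter_upwards [self_mem_nhdsWithin] with a (ha : 0 < a)
        exact lt_of_le_of_lt hx0 (hQmem a ha).1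
      · have hev := (H_tendsto hb hx0 (by linarith [hp.2] : x ≤ 1)).eventually_lt hH1 hx
        filter_upwards [hev, self_mem_nhdsWithin] with a h1 (ha : 0 < a)
        by_contra hcon
        push_neg at hcon
        have hmono : (∫ s in Ioo (0:ℝ) ((q a)^a), W b a s) ≤ ∫ s in Ioo (0:ℝ) x, W b a s :=
          integral_Ioo_mono_right (hQmem a ha).1.le hcon (by linarith [hp.2])
            (W_integrable hb ha) (fun t ht => (W_pos ha ht).le)
        rw [hHq a ha] at hmono
        linarith
    · intro x hx
      rcases lt_or_ge x 1 with hx1 | hx1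
      · have hev := hH1.eventually_lt (H_tendsto hb (by linarith [hp.1] : (0:ℝ) < x) hx1.le) hx
        filter_upwards [hev, self_mem_nhdsWithin] with a h1 (ha : 0 < a)
        by_contra hcon
        push_neg at hcon
        have hmono : (∫ s in Ioo (0:ℝ) x, W b a s) ≤ ∫ s in Ioo (0:ℝ) ((q a)^a), W b a s :=
          integral_Ioo_mono_right (by linarith [hp.1]) hcon (hQmem a ha).2.le
            (W_integrable hb ha) (fun t ht => (W_pos ha ht).le)
        rw [hHq a ha] at hmono
        linarith
      · filter_upwards [self_mem_nhdsWithin] with a (ha : 0 < a)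
        exact lt_of_lt_of_le (hQmem a ha).2 hx1
  have hlog : Tendsto (fun a => -Real.log ((q a) ^ a)) (𝓝[>] (0:ℝ)) (𝓝 (-Real.log p)) :=
    ((Real.continuousAt_log hp.1.ne').tendsto.comp htend).neg
  apply hlog.congr'
  filter_upwards [self_mem_nhdsWithin] with a (ha : 0 < a)
  rw [Real.log_rpow (hq a ha).1.1]
  ring

lemma int_rpow_Ioo {a x : ℝ} (ha : 0 < a) (hx : 0 ≤ x) :
    ∫ t in Ioo (0:ℝ) x, t ^ (a-1) = x ^ a / a := by
  rw [← integral_Ioc_eq_integral_Ioo, ← intervalIntegral.integral_of_le hx,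
    integral_rpow (Or.inl (by linarith : (-1:ℝ) < a - 1))]
  rw [Real.zero_rpow (by intro h; simp at h; linarith : a - 1 + 1 ≠ 0)]
  rw [show a - 1 + 1 = a by ring]
  ring

lemma phi_b_one {p : ℝ} (hp : p ∈ Set.Ioo (0 : ℝ) 1) {q : ℝ → ℝ} {a : ℝ} (ha : 0 < a)
    (hqa : q a ∈ Set.Ioo (0 : ℝ) 1)
    (heqa : (∫ t in Set.Ioo (0 : ℝ) (q a), t ^ (a - 1) * (1 - t) ^ ((1:ℝ) - 1))
        = p * ∫ t in Set.Ioo (0 : ℝ) 1, t ^ (a - 1) * (1 - t) ^ ((1:ℝ) - 1)) :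
    -a * Real.log (q a) = -Real.log p := by
  simp only [sub_self, Real.rpow_zero, mul_one] at heqa
  rw [int_rpow_Ioo ha hqa.1.le, int_rpow_Ioo ha zero_le_one, Real.one_rpow] at heqa
  have hqp : (q a) ^ a = p := by
    have := heqa
    field_simp at this
    exact this
  have := congrArg Real.log hqp
  rw [Real.log_rpow hqa.1] at this
  linarith [this]

theorem stmt_18 (p b : ℝ) (hp : p ∈ Set.Ioo (0 : ℝ) 1) (hb : 0 < b)
    (q : ℝ → ℝ)
    (hq : ∀ a : ℝ, 0 < a → q a ∈ Set.Ioo (0 : ℝ) 1 ∧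
      (∫ t in Set.Ioo (0 : ℝ) (q a), t ^ (a - 1) * (1 - t) ^ (b - 1))
        = p * ∫ t in Set.Ioo (0 : ℝ) 1, t ^ (a - 1) * (1 - t) ^ (b - 1)) :
    (b = 1 → ∀ a : ℝ, 0 < a → -a * Real.log (q a) = -Real.log p) ∧
    (1 < b → StrictMonoOn (fun a => -a * Real.log (q a)) (Set.Ioi 0)) ∧
    (b < 1 → StrictAntiOn (fun a => -a * Real.log (q a)) (Set.Ioi 0)) ∧
    Tendsto (fun a => -a * Real.log (q a)) (𝓝[>] 0) (𝓝 (-Real.log p)) := by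
  refine ⟨?_, ?_, ?_, phi_tendsto hp hb hq⟩
  · intro hb1 a ha
    subst hb1
    exact phi_b_one hp ha (hq a ha).1 (hq a ha).2
  · intro hb1 a ha a' ha' haa'
    exact (phi_lt hp hb hq ha haa').1 hb1
  · intro hb1 a ha a' ha' haa'
    exact (phi_lt hp hb hq ha haa').2 hb1
end
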